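/- Let Y^1, Y^2 be independent simple random walks on ℤ started at 0. There is a constant C (depending on β, K but not N, x, y) such that for all x, y ∈ ℤ and N, E[(1 + β^2 N^{-1/2})^{#{1 ≤ i ≤ ⌊KN⌋: Y^1_i = Y^2_i}} ; Y^1_{⌊KN⌋} = x, Y^2_{⌊KN⌋} = y] ≤ C (KN)^{-1/2} min(P(Y_{⌊KN⌋} = x), P(Y_{⌊KN⌋} = y)). -/

import Mathlib

open Finset

/-- Position after `i` steps of the walk whose step signs are given by `ε`. -/
def walkOf {m : ℕ} (ε : Fin m → Bool) (i : ℕ) : ℤ :=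
  ∑ j ∈ Finset.univ.filter (fun j : Fin m => (j : ℕ) < i), (if ε j then 1 else -1)

/-- Number of collisions of two walks in time window {1, …, m}. -/
def collisions (m : ℕ) (ε η : Fin m → Bool) : ℕ :=
  ((Finset.Icc 1 m).filter (fun i => walkOf ε i = walkOf η i)).card

/-- P(Y_m = x) for a simple random walk Y on ℤ started at 0. -/
noncomputable def srwProb (m : ℕ) (x : ℤ) : ℝ :=
  ((Finset.univ.filter (fun ε : Fin m → Bool => walkOf ε m = x)).card : ℝ) / 2 ^ m

/-- extension of ε to ℕ -/
def extW {m : ℕ} (ε : Fin m → Bool) : ℕ → Bool := fun t => if h : t < m then ε ⟨t, h⟩ else false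

lemma walkOf_eq {m : ℕ} (ε : Fin m → Bool) {i : ℕ} (h : i ≤ m) :
    walkOf ε i = ∑ t ∈ Finset.range i, (if extW ε t then (1:ℤ) else -1) := by
  rcases Nat.eq_zero_or_pos m with hm | hm
  · subst hm
    have hi : i = 0 := by omega
    subst hi
    simp [walkOf]
  unfold walkOf
  refine Finset.sum_nbij' (i := fun (t : Fin m) => (t : ℕ))
    (j := fun s => (⟨s % m, Nat.mod_lt _ hm⟩ : Fin m)) ?_ ?_ ?_ ?_ ?_
  · intro a ha; simp only [mem_filter] at ha; exact Finset.mem_range.mpr ha.2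
  · intro a ha
    simp only [Finset.mem_range] at ha
    simp only [mem_filter, mem_univ, true_and]
    show a % m < i
    rw [Nat.mod_eq_of_lt (by omega)]; omega
  · intro a ha; simp only [mem_filter] at ha
    apply Fin.ext; simp [Nat.mod_eq_of_lt (a.isLt)]
  · intro a ha; simp only [Finset.mem_range] at ha
    simp [Nat.mod_eq_of_lt (by omega : a < m)]
  · intro a ha
    simp only [mem_filter] at ha
    simp [extW, a.isLt]

lemma walkOf_zero {m : ℕ} (ε : Fin m → Bool) : walkOf ε 0 = 0 := by
  unfold walkOf
  rw [Finset.filter_false_of_mem (by intro x _; omega)]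
  simp

def glue (j m : ℕ) (ε₁ : Fin j → Bool) (ε₂ : Fin (m - j) → Bool) : Fin m → Bool :=
  fun t => if h : (t : ℕ) < j then ε₁ ⟨t, h⟩
    else ε₂ ⟨(t : ℕ) - j, Nat.sub_lt_sub_right (Nat.le_of_not_lt h) t.isLt⟩

lemma sum_glue {j m : ℕ} (hj : j ≤ m) (F : (Fin m → Bool) → ℝ) :
    ∑ ε : Fin m → Bool, F ε = ∑ ε₁ : Fin j → Bool, ∑ ε₂ : Fin (m - j) → Bool, F (glue j m ε₁ ε₂) := by
  have hpt := Fintype.sum_prod_type' (f := fun (ε₁ : Fin j → Bool) (ε₂ : Fin (m-j) → Bool) => F (glue j m ε₁ ε₂))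
  rw [← hpt]
  symm
  apply Fintype.sum_bijective (fun p : (Fin j → Bool) × (Fin (m-j) → Bool) => glue j m p.1 p.2)
  · constructor
    · rintro ⟨a1, a2⟩ ⟨b1, b2⟩ hab
      simp only at hab
      have e1 : a1 = b1 := by
        funext s
        have hc := congrFun hab ⟨s, lt_of_lt_of_le s.isLt hj⟩
        simpa [glue, s.isLt] using hc
      have e2 : a2 = b2 := by
        funext s
        have hs : (s:ℕ) < m - j := s.isLt
        have hc := congrFun hab ⟨j + s, by omega⟩
        have hne : ¬ ((j + (s:ℕ)) < j) := by omega
        simp only [glue] at hc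
        rw [dif_neg hne, dif_neg hne] at hc
        simpa [Nat.add_sub_cancel_left] using hc
      rw [e1, e2]
    · intro ε
      refine ⟨⟨fun s => ε ⟨s, lt_of_lt_of_le s.isLt hj⟩, fun s => ε ⟨j + s, by omega⟩⟩, ?_⟩
      funext t
      by_cases h : (t : ℕ) < j
      · simp only [glue, dif_pos h]
      · simp only [glue, dif_neg h]
        congr 1; apply Fin.ext; simp; omega
  · intro p; rfl

lemma walkOf_glue_of_le {j m : ℕ} (hj : j ≤ m) {i : ℕ} (hij : i ≤ j)
    (ε₁ : Fin j → Bool) (ε₂ : Fin (m - j) → Bool) :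
    walkOf (glue j m ε₁ ε₂) i = walkOf ε₁ i := by
  rw [walkOf_eq _ (le_trans hij hj), walkOf_eq _ hij]
  apply Finset.sum_congr rfl
  intro t ht
  simp only [Finset.mem_range] at ht
  have htj : t < j := lt_of_lt_of_le ht hij
  congr 1
  simp [extW, glue, htj, lt_of_lt_of_le htj hj]

lemma walkOf_glue_last {j m : ℕ} (hj : j ≤ m)
    (ε₁ : Fin j → Bool) (ε₂ : Fin (m - j) → Bool) :
    walkOf (glue j m ε₁ ε₂) m = walkOf ε₁ j + walkOf ε₂ (m - j) := by
  rw [walkOf_eq _ (le_refl m), walkOf_eq _ (le_refl j), walkOf_eq _ (le_refl (m-j))]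
  rw [Finset.range_eq_Ico, ← Finset.sum_Ico_consecutive _ (Nat.zero_le j) hj]
  congr 1
  · rw [← Finset.range_eq_Ico]
    apply Finset.sum_congr rfl
    intro t ht
    simp only [Finset.mem_range] at ht
    congr 1
    simp [extW, glue, ht, lt_of_lt_of_le ht hj]
  · rw [Finset.sum_Ico_eq_sum_range]
    apply Finset.sum_congr rfl
    intro t ht
    simp only [Finset.mem_range] at ht
    have h1 : j + t < m := by omega
    have key : extW (glue j m ε₁ ε₂) (j + t) = ε₂ ⟨t, ht⟩ := by
      simp only [extW, dif_pos h1, glue, dif_neg (by omega : ¬ ((j:ℕ) + t < j))]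
      congr 1; apply Fin.ext; simp
    rw [key]
    simp [extW, ht]

def cntW (n : ℕ) (z : ℤ) : ℕ :=
  ((Finset.univ : Finset (Fin n → Bool)).filter (fun ε => walkOf ε n = z)).card

lemma walkOf_full {n : ℕ} (ε : Fin n → Bool) :
    walkOf ε n = 2 * ((Finset.univ.filter (fun t => ε t = true)).card : ℤ) - n := by
  unfold walkOf
  rw [Finset.filter_true_of_mem (by intro t _; exact t.isLt)]
  have h : ∀ t : Fin n, (if ε t then (1:ℤ) else -1) = 2 * (if ε t = true then (1:ℤ) else 0) - 1 := by
    intro t; by_cases h : ε t <;> simp [h]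
  rw [Finset.sum_congr rfl (fun t _ => h t)]
  rw [Finset.sum_sub_distrib, ← Finset.mul_sum, Finset.sum_boole, Finset.sum_const]
  simp [mul_comm]

lemma cntW_le_choose (n : ℕ) (z : ℤ) : cntW n z ≤ n.choose (n / 2) := by
  by_cases hne : ((Finset.univ : Finset (Fin n → Bool)).filter (fun ε => walkOf ε n = z)).Nonempty
  · obtain ⟨ε₀, hε₀⟩ := hne
    simp only [mem_filter] at hε₀
    set k := (Finset.univ.filter (fun t => ε₀ t = true)).card with hk
    have hcard : cntW n z ≤ (((Finset.univ : Finset (Fin n)).powersetCard k)).card := by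
      apply Finset.card_le_card_of_injOn (fun ε => Finset.univ.filter (fun t => ε t = true))
      · intro ε hε
        simp only [mem_coe, mem_filter] at hε ⊢
        rw [Finset.mem_powersetCard]
        refine ⟨Finset.subset_univ _, ?_⟩
        have h1 := walkOf_full ε
        have h2 := walkOf_full ε₀
        rw [hε.2] at h1
        rw [hε₀.2] at h2
        have : ((Finset.univ.filter (fun t => ε t = true)).card : ℤ) = (k : ℤ) := by omega
        exact_mod_cast this
      · intro a _ b _ hab
        funext t
        simp only at hab
        have h3 : (t ∈ Finset.univ.filter (fun s => a s = true)) ↔ (t ∈ Finset.univ.filter (fun s => b s = true)) := by rw [hab]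
        simp only [mem_filter, mem_univ, true_and] at h3
        by_cases h : a t <;> by_cases h' : b t <;> simp_all
    calc cntW n z ≤ _ := hcard
      _ = n.choose k := by rw [Finset.card_powersetCard]; simp
      _ ≤ n.choose (n / 2) := Nat.choose_le_middle k n
  · rw [Finset.not_nonempty_iff_eq_empty] at hne
    unfold cntW
    rw [hne]
    simp

lemma centralBinom_sq_le (t : ℕ) : ((Nat.centralBinom t : ℝ))^2 * (t + 1) ≤ 16 ^ t := by
  induction t with
  | zero => simp [Nat.centralBinom]
  | succ t ih =>
    have key : ((t:ℝ) + 1) * Nat.centralBinom (t+1) = 2 * (2*t+1) * Nat.centralBinom t := by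
      exact_mod_cast congrArg (Nat.cast : ℕ → ℝ) (Nat.succ_mul_centralBinom_succ t)
    have hpos2 : (0:ℝ) < ((t:ℝ)+1)^2 := by positivity
    push_cast
    rw [← mul_le_mul_iff_of_pos_right hpos2]
    have key2 : ((Nat.centralBinom (t+1) : ℝ))^2 * ((t:ℝ)+1)^2 = (2*(2*(t:ℝ)+1))^2 * (Nat.centralBinom t : ℝ)^2 := by
      calc ((Nat.centralBinom (t+1) : ℝ))^2 * ((t:ℝ)+1)^2
          = (((t:ℝ) + 1) * Nat.centralBinom (t+1))^2 := by ring
        _ = (2 * (2*(t:ℝ)+1) * Nat.centralBinom t)^2 := by rw [key]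
        _ = (2*(2*(t:ℝ)+1))^2 * (Nat.centralBinom t : ℝ)^2 := by ring
    have e1 : ((Nat.centralBinom (t+1) : ℝ))^2 * ((t:ℝ)+1+1) * ((t:ℝ)+1)^2
        = (2*(2*(t:ℝ)+1))^2 * (Nat.centralBinom t : ℝ)^2 * ((t:ℝ)+2) := by
      calc ((Nat.centralBinom (t+1) : ℝ))^2 * ((t:ℝ)+1+1) * ((t:ℝ)+1)^2
          = (((Nat.centralBinom (t+1) : ℝ))^2 * ((t:ℝ)+1)^2) * ((t:ℝ)+2) := by ring
        _ = ((2*(2*(t:ℝ)+1))^2 * (Nat.centralBinom t : ℝ)^2) * ((t:ℝ)+2) := by rw [key2]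
        _ = (2*(2*(t:ℝ)+1))^2 * (Nat.centralBinom t : ℝ)^2 * ((t:ℝ)+2) := by ring
    rw [e1]
    have hq : ((2*(2*(t:ℝ)+1))^2 * ((t:ℝ)+2)) ≤ 16 * ((t:ℝ)+1)^3 := by nlinarith [sq_nonneg ((t:ℝ))]
    calc (2*(2*(t:ℝ)+1))^2 * (Nat.centralBinom t : ℝ)^2 * ((t:ℝ)+2)
        = ((2*(2*(t:ℝ)+1))^2 * ((t:ℝ)+2)) * (Nat.centralBinom t : ℝ)^2 := by ring
      _ ≤ (16 * ((t:ℝ)+1)^3) * (Nat.centralBinom t : ℝ)^2 := by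
          apply mul_le_mul_of_nonneg_right hq (by positivity)
      _ = 16 * ((t:ℝ)+1)^2 * ((Nat.centralBinom t : ℝ)^2 * ((t:ℝ)+1)) := by ring
      _ ≤ 16 * ((t:ℝ)+1)^2 * 16^t := by
          apply mul_le_mul_of_nonneg_left ih (by positivity)
      _ = 16^(t+1) * ((t:ℝ)+1)^2 := by ring

lemma choose_odd_le (k : ℕ) : (2*(k+1)+1).choose (k+1) ≤ 2 * Nat.centralBinom (k+1) := by
  have e : 2*(k+1)+1 = (2*k+2)+1 := by ring
  rw [e, Nat.choose_succ_succ (2*k+2) k]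
  simp only [Nat.succ_eq_add_one]
  have a1 : (2*k+2).choose k ≤ (2*k+2).choose ((2*k+2)/2) := Nat.choose_le_middle k (2*k+2)
  have e2 : (2*k+2)/2 = k+1 := by omega
  have e3 : (2*k+2).choose (k+1) = Nat.centralBinom (k+1) := by
    rw [show 2*k+2 = 2*(k+1) from by ring]; rfl
  rw [e2, e3] at a1
  rw [e3]
  omega

lemma choose_middle_sq_le (n : ℕ) : ((n.choose (n/2) : ℝ))^2 * (n + 1) ≤ 2 * 4 ^ n := by
  rcases Nat.even_or_odd n with ⟨t, ht⟩ | ⟨t, ht⟩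
  · subst ht
    have h1 : (t + t) / 2 = t := by omega
    rw [h1]
    have h2 : (t+t).choose t = Nat.centralBinom t := by unfold Nat.centralBinom; congr 1; omega
    rw [h2]
    have h3 := centralBinom_sq_le t
    have h4 : ((4:ℝ))^(t+t) = 16^t := by
      rw [show ((16:ℝ)) = 4^2 by norm_num, ← pow_mul]; congr 1; omega
    rw [h4]
    push_cast
    nlinarith [sq_nonneg ((Nat.centralBinom t : ℝ))]
  · subst ht
    rcases Nat.eq_zero_or_pos t with h | h
    · subst h; norm_num
    obtain ⟨k, hk⟩ : ∃ k, t = k + 1 := ⟨t - 1, by omega⟩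
    subst hk
    have h1 : (2*(k+1) + 1) / 2 = k+1 := by omega
    rw [h1]
    have h2 := choose_odd_le k
    have h2' : ((2*(k+1)+1).choose (k+1) : ℝ) ≤ 2 * Nat.centralBinom (k+1) := by exact_mod_cast h2
    have h3 := centralBinom_sq_le (k+1)
    have h4 : ((4:ℝ))^(2*(k+1)+1) = 4 * 16^(k+1) := by
      rw [pow_succ, show ((16:ℝ)) = 4^2 by norm_num, ← pow_mul]
      ring_nf
    rw [h4]
    push_cast at h2' h3 ⊢
    have hnn : (0:ℝ) ≤ (((2*(k+1)+1).choose (k+1) : ℕ) : ℝ) := by positivity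
    have hsq : (((2*(k+1)+1).choose (k+1) : ℕ) : ℝ)^2 ≤ (2 * (Nat.centralBinom (k+1) : ℝ))^2 := by
      apply pow_le_pow_left₀ hnn
      push_cast
      convert h2' using 2 <;> push_cast <;> ring
    push_cast at hsq
    nlinarith [hsq, h3]

lemma cntW_le (n : ℕ) (z : ℤ) :
    (cntW n z : ℝ) ≤ Real.sqrt 2 * 2^n / Real.sqrt (n+1) := by
  have h1 : (cntW n z : ℝ) ≤ (n.choose (n/2) : ℝ) := by exact_mod_cast cntW_le_choose n z
  have h2 : ((n.choose (n/2) : ℝ)) ≤ Real.sqrt 2 * 2^n / Real.sqrt (n+1) := by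
    rw [le_div_iff₀ (by positivity : (0:ℝ) < Real.sqrt ((n:ℝ)+1))]
    have l1 : (n.choose (n/2) : ℝ) * Real.sqrt ((n:ℝ)+1)
        = Real.sqrt ((n.choose (n/2) : ℝ)^2 * ((n:ℝ)+1)) := by
      rw [Real.sqrt_mul (by positivity), Real.sqrt_sq (by positivity)]
    have l2 : Real.sqrt 2 * (2:ℝ)^n = Real.sqrt (2 * 4^n) := by
      rw [Real.sqrt_mul (by norm_num : (0:ℝ) ≤ 2)]
      congr 1
      rw [show ((4:ℝ))^n = ((2:ℝ)^n)^2 from by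
        rw [← pow_mul, show (4:ℝ) = 2^2 from by norm_num, ← pow_mul, Nat.mul_comm]]
      rw [Real.sqrt_sq (by positivity)]
    rw [l1, l2]
    exact Real.sqrt_le_sqrt (choose_middle_sq_le n)
  linarith

/-- (A1) partial sums of 1/√t -/
lemma sum_inv_sqrt_le (n : ℕ) : ∑ t ∈ Finset.Icc 1 n, 1 / Real.sqrt t ≤ 2 * Real.sqrt n := by
  induction n with
  | zero => simp
  | succ n ih =>
    rw [show Finset.Icc 1 (n+1) = insert (n+1) (Finset.Icc 1 n) from by
      ext a; simp [Finset.mem_Icc, Finset.mem_insert]; omega]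
    rw [Finset.sum_insert (by simp [Finset.mem_Icc])]
    have ha : (0:ℝ) ≤ n := by positivity
    have hb : Real.sqrt n ≤ Real.sqrt (n+1) := by
      apply Real.sqrt_le_sqrt; push_cast; linarith
    have hsq : (Real.sqrt n)^2 = (n:ℝ) := Real.sq_sqrt ha
    have hsq' : (Real.sqrt ((n:ℝ)+1))^2 = (n:ℝ)+1 := Real.sq_sqrt (by linarith)
    have hpos : (0:ℝ) < Real.sqrt ((n:ℝ)+1) := by
      apply Real.sqrt_pos.mpr; linarith
    have key : 1 / Real.sqrt ((n:ℝ)+1) ≤ 2 * Real.sqrt ((n:ℝ)+1) - 2 * Real.sqrt n := by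
      rw [div_le_iff₀ hpos]
      have h0 : (0:ℝ) ≤ Real.sqrt n := Real.sqrt_nonneg _
      nlinarith [hb, hsq, hsq']
    have : ((n:ℝ)+1) = ((n+1 : ℕ) : ℝ) := by push_cast; ring
    calc 1 / Real.sqrt ((n+1:ℕ)) + ∑ t ∈ Finset.Icc 1 n, 1 / Real.sqrt t
        ≤ 1 / Real.sqrt ((n:ℝ)+1) + 2 * Real.sqrt n := by
          rw [← this]; linarith [ih]
      _ ≤ 2 * Real.sqrt ((n:ℝ)+1) := by linarith
      _ = 2 * Real.sqrt ((n+1:ℕ)) := by rw [← this]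

/-- geometric sums -/
lemma geo_sum_le {r : ℝ} (h0 : 0 ≤ r) (h1 : r < 1) (T : ℕ) :
    ∑ s ∈ Finset.range T, r^s ≤ 1 / (1 - r) := by
  rw [geom_sum_eq (ne_of_lt h1) T]
  have hr1 : (0:ℝ) < 1 - r := by linarith
  have e : (r^T - 1)/(r-1) = (1-r^T)/(1-r) := by
    rw [← neg_div_neg_eq]; ring_nf
  rw [e]
  apply div_le_div_of_nonneg_right ?_ (le_of_lt hr1)
  have : (0:ℝ) ≤ r^T := by positivity
  linarith

lemma geo_sum_le' {r : ℝ} (h0 : 0 ≤ r) (h1 : r < 1) (T : ℕ) :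
    ∑ s ∈ Finset.Icc 1 T, r^s ≤ r / (1 - r) := by
  have e : ∑ s ∈ Finset.Icc 1 T, r^s = r * ∑ s ∈ Finset.range T, r^s := by
    rw [← Finset.Ico_add_one_right_eq_Icc, Finset.sum_Ico_eq_sum_range]
    try simp only [Nat.add_sub_cancel]
    rw [Finset.mul_sum]
    apply Finset.sum_congr rfl
    intro k _
    rw [pow_add, pow_one]
  rw [e]
  have hr1 : 0 < 1 - r := by linarith
  calc r * ∑ s ∈ Finset.range T, r^s ≤ r * (1 / (1-r)) := by
        apply mul_le_mul_of_nonneg_left (geo_sum_le h0 h1 T) h0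
    _ = r / (1-r) := by field_simp

lemma sum_exp_neg_le {θ : ℝ} (hθ : 0 < θ) (T : ℕ) :
    ∑ s ∈ Finset.Icc 1 T, Real.exp (-θ * s) ≤ 1 / θ := by
  have hr : Real.exp (-θ) < 1 := by
    rw [Real.exp_lt_one_iff]; linarith
  have hr0 : 0 < Real.exp (-θ) := Real.exp_pos _
  have e : ∀ s : ℕ, Real.exp (-θ * s) = (Real.exp (-θ))^s := by
    intro s
    rw [← Real.exp_nat_mul]
    congr 1
    ring
  rw [Finset.sum_congr rfl (fun s _ => e s)]
  calc ∑ s ∈ Finset.Icc 1 T, (Real.exp (-θ))^s ≤ Real.exp (-θ) / (1 - Real.exp (-θ)) :=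
        geo_sum_le' (le_of_lt hr0) hr T
    _ ≤ 1 / θ := by
        rw [div_le_div_iff₀ (by linarith) hθ]
        have h2 := Real.add_one_le_exp θ
        have h3 : Real.exp (-θ) * Real.exp θ = 1 := by
          rw [← Real.exp_add, neg_add_cancel, Real.exp_zero]
        nlinarith [hr0]

lemma sqrt_add_one_le (c : ℝ) (hc : 0 ≤ c) : Real.sqrt (c + 1) ≤ Real.sqrt c + 1 := by
  have h1 : c + 1 ≤ (Real.sqrt c + 1)^2 := by
    have := Real.sq_sqrt hc
    nlinarith [Real.sqrt_nonneg c]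
  calc Real.sqrt (c+1) ≤ Real.sqrt ((Real.sqrt c + 1)^2) := Real.sqrt_le_sqrt h1
    _ = Real.sqrt c + 1 := Real.sqrt_sq (by nlinarith [Real.sqrt_nonneg c])

/-- helper: if b ≤ 2a then 1/√a ≤ √2/√b -/
lemma inv_sqrt_half {a b : ℝ} (ha : 0 < a) (hb : 0 < b) (hab : b ≤ 2*a) :
    1 / Real.sqrt a ≤ Real.sqrt 2 / Real.sqrt b := by
  rw [div_le_div_iff₀ (Real.sqrt_pos.mpr ha) (Real.sqrt_pos.mpr hb)]
  calc 1 * Real.sqrt b = Real.sqrt b := by ring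
    _ ≤ Real.sqrt (2*a) := Real.sqrt_le_sqrt hab
    _ = Real.sqrt 2 * Real.sqrt a := Real.sqrt_mul (by norm_num) a

/-- e^{-x} ≤ 1/√(2x) -/
lemma exp_neg_le_inv_sqrt {x : ℝ} (hx : 0 < x) : Real.exp (-x) ≤ 1 / Real.sqrt (2*x) := by
  have h2 : (2:ℝ)*x ≤ Real.exp x ^ 2 := by
    rw [sq, ← Real.exp_add]
    have := Real.add_one_le_exp (x + x)
    linarith
  have h1 : Real.sqrt (2*x) ≤ Real.exp x := by
    calc Real.sqrt (2*x) ≤ Real.sqrt (Real.exp x ^ 2) := Real.sqrt_le_sqrt h2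
      _ = Real.exp x := Real.sqrt_sq (le_of_lt (Real.exp_pos x))
  rw [Real.exp_neg, one_div]
  exact inv_anti₀ (Real.sqrt_pos.mpr (by linarith)) h1

/-- (A2) -/
lemma sum_exp_inv_sqrt_le {θ : ℝ} (hθ : 0 < θ) (T : ℕ) :
    ∑ s ∈ Finset.Icc 1 T, Real.exp (-θ * s) / Real.sqrt s ≤ 5 / Real.sqrt θ := by
  have hsθ : 0 < Real.sqrt θ := Real.sqrt_pos.mpr hθ
  by_cases hθ1 : 1 ≤ θ
  · have h1 : ∀ s ∈ Finset.Icc 1 T, Real.exp (-θ*s)/Real.sqrt s ≤ Real.exp (-θ*s) := by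
      intro s hs
      simp only [Finset.mem_Icc] at hs
      have h2 : (1:ℝ) ≤ Real.sqrt s := by
        rw [show (1:ℝ) = Real.sqrt 1 from (Real.sqrt_one).symm]
        apply Real.sqrt_le_sqrt; exact_mod_cast hs.1
      calc Real.exp (-θ*s)/Real.sqrt s ≤ Real.exp (-θ*s)/1 :=
            div_le_div_of_nonneg_left (le_of_lt (Real.exp_pos _)) (by norm_num) h2
        _ = Real.exp (-θ*s) := by ring
    calc ∑ s ∈ Finset.Icc 1 T, Real.exp (-θ*s)/Real.sqrt s ≤ ∑ s ∈ Finset.Icc 1 T, Real.exp (-θ*s) :=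
          Finset.sum_le_sum h1
      _ ≤ 1/θ := sum_exp_neg_le hθ T
      _ ≤ 5/Real.sqrt θ := by
          rw [div_le_div_iff₀ hθ hsθ]
          have h3 : Real.sqrt θ ≤ θ := by
            calc Real.sqrt θ ≤ Real.sqrt (θ^2) := Real.sqrt_le_sqrt (by nlinarith)
              _ = θ := Real.sqrt_sq (by linarith)
          linarith
  · push_neg at hθ1
    set n : ℕ := ⌈1/θ⌉₊ with hn
    have hn1 : 1 ≤ n := by
      apply Nat.one_le_ceil_iff.mpr; positivity
    have hnθ : 1/θ ≤ (n:ℝ) := Nat.le_ceil _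
    have hnθ' : (n:ℝ) < 1/θ + 1 := Nat.ceil_lt_add_one (by positivity)
    have hsn : 0 < Real.sqrt n := Real.sqrt_pos.mpr (by exact_mod_cast hn1)
    rw [← Finset.sum_filter_add_sum_filter_not (Finset.Icc 1 T) (fun s => s ≤ n)]
    have key1 : Real.sqrt ((n:ℝ)) ≤ 1/Real.sqrt θ + 1 := by
      have : Real.sqrt ((n:ℝ)) ≤ Real.sqrt (1/θ + 1) := Real.sqrt_le_sqrt (le_of_lt hnθ')
      have h4 : Real.sqrt (1/θ + 1) ≤ Real.sqrt (1/θ) + 1 := sqrt_add_one_le _ (by positivity)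
      have h5 : Real.sqrt (1/θ) = 1/Real.sqrt θ := by
        rw [one_div, one_div, Real.sqrt_inv]
      linarith
    have key2 : 1/Real.sqrt θ ≥ 1 := by
      rw [ge_iff_le, le_div_iff₀ hsθ]
      have : Real.sqrt θ ≤ Real.sqrt 1 := Real.sqrt_le_sqrt (le_of_lt hθ1)
      rw [Real.sqrt_one] at this
      linarith
    have part1 : ∑ s ∈ (Finset.Icc 1 T).filter (fun s => s ≤ n), Real.exp (-θ*s)/Real.sqrt s
        ≤ 4 / Real.sqrt θ := by
      calc ∑ s ∈ (Finset.Icc 1 T).filter (fun s => s ≤ n), Real.exp (-θ*s)/Real.sqrt s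
          ≤ ∑ s ∈ (Finset.Icc 1 T).filter (fun s => s ≤ n), 1/Real.sqrt s := by
            apply Finset.sum_le_sum
            intro s hs
            simp only [Finset.mem_filter, Finset.mem_Icc] at hs
            apply div_le_div_of_nonneg_right ?_ (Real.sqrt_nonneg _)
            rw [Real.exp_le_one_iff]
            have hs0 : (0:ℝ) ≤ (s:ℝ) := by positivity
            nlinarith
        _ ≤ ∑ s ∈ Finset.Icc 1 n, 1/Real.sqrt s := by
            apply Finset.sum_le_sum_of_subset_of_nonneg
            · intro s hs
              simp only [Finset.mem_filter, Finset.mem_Icc] at hs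
              simp only [Finset.mem_Icc]
              exact ⟨hs.1.1, hs.2⟩
            · intro s _ _; positivity
        _ ≤ 2 * Real.sqrt n := sum_inv_sqrt_le n
        _ ≤ 2 * (1/Real.sqrt θ + 1) := by linarith
        _ ≤ 4 / Real.sqrt θ := by
            have h4 : 4/Real.sqrt θ = 4*(1/Real.sqrt θ) := by ring
            linarith [key2, h4]
    have part2 : ∑ s ∈ (Finset.Icc 1 T).filter (fun s => ¬ s ≤ n), Real.exp (-θ*s)/Real.sqrt s
        ≤ 1 / Real.sqrt θ := by
      calc ∑ s ∈ (Finset.Icc 1 T).filter (fun s => ¬ s ≤ n), Real.exp (-θ*s)/Real.sqrt s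
          ≤ ∑ s ∈ (Finset.Icc 1 T).filter (fun s => ¬ s ≤ n), Real.exp (-θ*s)/Real.sqrt n := by
            apply Finset.sum_le_sum
            intro s hs
            simp only [Finset.mem_filter, Finset.mem_Icc] at hs
            apply div_le_div_of_nonneg_left (le_of_lt (Real.exp_pos _)) hsn
            apply Real.sqrt_le_sqrt
            have : n ≤ s := by omega
            exact_mod_cast this
        _ = (∑ s ∈ (Finset.Icc 1 T).filter (fun s => ¬ s ≤ n), Real.exp (-θ*s)) / Real.sqrt n := by
            rw [Finset.sum_div]
        _ ≤ (1/θ) / Real.sqrt n := by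
            gcongr
            calc ∑ s ∈ (Finset.Icc 1 T).filter (fun s => ¬ s ≤ n), Real.exp (-θ*s)
                ≤ ∑ s ∈ Finset.Icc 1 T, Real.exp (-θ*s) := by
                  apply Finset.sum_le_sum_of_subset_of_nonneg (Finset.filter_subset _ _)
                  intro s _ _; positivity
              _ ≤ 1/θ := sum_exp_neg_le hθ T
        _ ≤ 1 / Real.sqrt θ := by
            have hsn' : 1/Real.sqrt θ ≤ Real.sqrt n := by
              rw [one_div, ← Real.sqrt_inv]
              apply Real.sqrt_le_sqrt
              rw [← one_div]
              exact hnθ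
            have h6 : θ * (1/Real.sqrt θ) = Real.sqrt θ := by
              rw [mul_one_div, div_eq_iff (ne_of_gt hsθ)]
              exact (Real.mul_self_sqrt (le_of_lt hθ)).symm
            have e1 : Real.sqrt θ ≤ θ * Real.sqrt n := by
              calc Real.sqrt θ = θ * (1/Real.sqrt θ) := h6.symm
                _ ≤ θ * Real.sqrt n := mul_le_mul_of_nonneg_left hsn' (le_of_lt hθ)
            rw [div_div, div_le_div_iff₀ (by positivity) hsθ]
            linarith
    have h5 : 5/Real.sqrt θ = 4/Real.sqrt θ + 1/Real.sqrt θ := by ring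
    linarith [part1, part2, h5]

/-- (A3) -/
lemma conv_bound {θ : ℝ} (hθ : 0 < θ) {j : ℕ} (hj : 1 ≤ j) :
    ∑ i ∈ Finset.Icc 1 (j-1), Real.exp (θ*i) / (Real.sqrt i * Real.sqrt ((j:ℝ)-i))
      ≤ 11 * Real.exp (θ*j) / Real.sqrt (θ*j) := by
  have hjR : (1:ℝ) ≤ (j:ℝ) := by exact_mod_cast hj
  have hsj : 0 < Real.sqrt j := Real.sqrt_pos.mpr (by linarith)
  have hsθj : 0 < Real.sqrt (θ*j) := Real.sqrt_pos.mpr (by positivity)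
  rw [← Finset.sum_filter_add_sum_filter_not (Finset.Icc 1 (j-1)) (fun i => 2*i ≤ j)]
  have sqrtθj : Real.sqrt (θ*j) = Real.sqrt θ * Real.sqrt j := Real.sqrt_mul (le_of_lt hθ) _
  have part1 : ∑ i ∈ (Finset.Icc 1 (j-1)).filter (fun i => 2*i ≤ j), Real.exp (θ*i) / (Real.sqrt i * Real.sqrt ((j:ℝ)-i))
      ≤ 3 * Real.exp (θ*j) / Real.sqrt (θ*j) := by
    have hb : ∀ i ∈ (Finset.Icc 1 (j-1)).filter (fun i => 2*i ≤ j),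
        Real.exp (θ*i) / (Real.sqrt i * Real.sqrt ((j:ℝ)-i))
          ≤ Real.exp (θ*j/2) * (Real.sqrt 2 / Real.sqrt j) * (1/Real.sqrt i) := by
      intro i hi
      simp only [Finset.mem_filter, Finset.mem_Icc] at hi
      obtain ⟨⟨hi1, hi2⟩, hi3⟩ := hi
      have hiR : (1:ℝ) ≤ (i:ℝ) := by exact_mod_cast hi1
      have hijR : (i:ℝ) ≤ (j:ℝ) - 1 := by
        have : (i:ℝ) ≤ ((j-1:ℕ):ℝ) := by exact_mod_cast hi2
        rw [Nat.cast_sub hj] at this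
        simpa using this
      have hi3R : 2*(i:ℝ) ≤ (j:ℝ) := by exact_mod_cast hi3
      have hsi : 0 < Real.sqrt i := Real.sqrt_pos.mpr (by linarith)
      have hji : 0 < (j:ℝ) - i := by linarith
      have h1 : Real.exp (θ*i) ≤ Real.exp (θ*j/2) := by
        apply Real.exp_le_exp.mpr
        rw [div_eq_mul_inv]
        nlinarith
      have h2 : 1 / Real.sqrt ((j:ℝ)-i) ≤ Real.sqrt 2 / Real.sqrt j := by
        apply inv_sqrt_half hji (by linarith) (by linarith)
      calc Real.exp (θ*i) / (Real.sqrt i * Real.sqrt ((j:ℝ)-i))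
          = Real.exp (θ*i) * (1/Real.sqrt ((j:ℝ)-i)) * (1/Real.sqrt i) := by
            field_simp; try ring
        _ ≤ Real.exp (θ*j/2) * (Real.sqrt 2 / Real.sqrt j) * (1/Real.sqrt i) := by
            apply mul_le_mul_of_nonneg_right _ (by positivity)
            apply mul_le_mul h1 h2 (by positivity) (by positivity)
    calc ∑ i ∈ (Finset.Icc 1 (j-1)).filter (fun i => 2*i ≤ j), Real.exp (θ*i) / (Real.sqrt i * Real.sqrt ((j:ℝ)-i))
        ≤ ∑ i ∈ (Finset.Icc 1 (j-1)).filter (fun i => 2*i ≤ j), Real.exp (θ*j/2) * (Real.sqrt 2 / Real.sqrt j) * (1/Real.sqrt i) :=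
          Finset.sum_le_sum hb
      _ = Real.exp (θ*j/2) * (Real.sqrt 2 / Real.sqrt j) * ∑ i ∈ (Finset.Icc 1 (j-1)).filter (fun i => 2*i ≤ j), (1/Real.sqrt i) := by
          rw [Finset.mul_sum]
      _ ≤ Real.exp (θ*j/2) * (Real.sqrt 2 / Real.sqrt j) * (2 * Real.sqrt j) := by
          apply mul_le_mul_of_nonneg_left _ (by positivity)
          calc ∑ i ∈ (Finset.Icc 1 (j-1)).filter (fun i => 2*i ≤ j), (1/Real.sqrt i)
              ≤ ∑ i ∈ Finset.Icc 1 j, (1/Real.sqrt i) := by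
                apply Finset.sum_le_sum_of_subset_of_nonneg
                · intro i hi
                  simp only [Finset.mem_filter, Finset.mem_Icc] at hi
                  simp only [Finset.mem_Icc]
                  omega
                · intro i _ _; positivity
            _ ≤ 2 * Real.sqrt j := sum_inv_sqrt_le j
      _ = 2 * Real.sqrt 2 * Real.exp (θ*j/2) := by field_simp; try ring
      _ ≤ 3 * Real.exp (θ*j) / Real.sqrt (θ*j) := by
          have he : Real.exp (θ*j/2) = Real.exp (θ*j) * Real.exp (-(θ*j/2)) := by
            rw [← Real.exp_add]; ring_nf
          rw [he]
          have hx : (0:ℝ) < θ*j/2 := by positivity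
          have := exp_neg_le_inv_sqrt hx
          have e2 : 2*(θ*j/2) = θ*j := by ring
          rw [e2] at this
          have hexp : 0 < Real.exp (θ*j) := Real.exp_pos _
          calc 2 * Real.sqrt 2 * (Real.exp (θ*j) * Real.exp (-(θ*j/2)))
              ≤ 2 * Real.sqrt 2 * (Real.exp (θ*j) * (1/Real.sqrt (θ*j))) := by
                apply mul_le_mul_of_nonneg_left _ (by positivity)
                apply mul_le_mul_of_nonneg_left _ (by positivity)
                exact this
            _ = 2 * Real.sqrt 2 * Real.exp (θ*j) / Real.sqrt (θ*j) := by ring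
            _ ≤ 3 * Real.exp (θ*j) / Real.sqrt (θ*j) := by
                gcongr
                nlinarith [Real.sq_sqrt (by norm_num : (0:ℝ) ≤ 2), Real.sqrt_nonneg 2]
  have part2 : ∑ i ∈ (Finset.Icc 1 (j-1)).filter (fun i => ¬ 2*i ≤ j), Real.exp (θ*i) / (Real.sqrt i * Real.sqrt ((j:ℝ)-i))
      ≤ 8 * Real.exp (θ*j) / Real.sqrt (θ*j) := by
    have hb : ∀ i ∈ (Finset.Icc 1 (j-1)).filter (fun i => ¬ 2*i ≤ j),
        Real.exp (θ*i) / (Real.sqrt i * Real.sqrt ((j:ℝ)-i))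
          ≤ (Real.sqrt 2 / Real.sqrt j) * (Real.exp (θ*i) / Real.sqrt ((j:ℝ)-i)) := by
      intro i hi
      simp only [Finset.mem_filter, Finset.mem_Icc] at hi
      obtain ⟨⟨hi1, hi2⟩, hi3⟩ := hi
      have hiR : (1:ℝ) ≤ (i:ℝ) := by exact_mod_cast hi1
      have hijR : (i:ℝ) ≤ (j:ℝ) - 1 := by
        have : (i:ℝ) ≤ ((j-1:ℕ):ℝ) := by exact_mod_cast hi2
        rw [Nat.cast_sub hj] at this
        simpa using this
      have hi3R : (j:ℝ) ≤ 2*(i:ℝ) := by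
        have : j ≤ 2*i := by omega
        exact_mod_cast this
      have hji : 0 < (j:ℝ) - i := by linarith
      have h2 : 1 / Real.sqrt i ≤ Real.sqrt 2 / Real.sqrt j := by
        apply inv_sqrt_half (by linarith) (by linarith) (by linarith)
      calc Real.exp (θ*i) / (Real.sqrt i * Real.sqrt ((j:ℝ)-i))
          = (1/Real.sqrt i) * (Real.exp (θ*i) / Real.sqrt ((j:ℝ)-i)) := by
            field_simp; try ring
        _ ≤ (Real.sqrt 2 / Real.sqrt j) * (Real.exp (θ*i) / Real.sqrt ((j:ℝ)-i)) := by
            apply mul_le_mul_of_nonneg_right h2 (by positivity)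
    have reindex : ∑ i ∈ Finset.Icc 1 (j-1), Real.exp (θ*i) / Real.sqrt ((j:ℝ)-i)
        = ∑ s ∈ Finset.Icc 1 (j-1), Real.exp (θ*((j:ℝ)-s)) / Real.sqrt s := by
      apply Finset.sum_nbij' (i := fun i => j - i) (j := fun s => j - s)
      · intro a ha; simp only [Finset.mem_Icc] at *; omega
      · intro a ha; simp only [Finset.mem_Icc] at *; omega
      · intro a ha; simp only [Finset.mem_Icc] at ha; omega
      · intro a ha; simp only [Finset.mem_Icc] at ha; omega
      · intro a ha
        simp only [Finset.mem_Icc] at ha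
        have e1 : ((j - a : ℕ):ℝ) = (j:ℝ) - a := by
          rw [Nat.cast_sub (by omega)]
        rw [e1]
        try rw [show (j:ℝ) - ((j:ℝ) - (a:ℝ)) = (a:ℝ) from by ring]
    calc ∑ i ∈ (Finset.Icc 1 (j-1)).filter (fun i => ¬ 2*i ≤ j), Real.exp (θ*i) / (Real.sqrt i * Real.sqrt ((j:ℝ)-i))
        ≤ ∑ i ∈ (Finset.Icc 1 (j-1)).filter (fun i => ¬ 2*i ≤ j), (Real.sqrt 2 / Real.sqrt j) * (Real.exp (θ*i) / Real.sqrt ((j:ℝ)-i)) :=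
          Finset.sum_le_sum hb
      _ ≤ ∑ i ∈ Finset.Icc 1 (j-1), (Real.sqrt 2 / Real.sqrt j) * (Real.exp (θ*i) / Real.sqrt ((j:ℝ)-i)) := by
          apply Finset.sum_le_sum_of_subset_of_nonneg (Finset.filter_subset _ _)
          intro i hi _
          simp only [Finset.mem_Icc] at hi
          have hijR : (i:ℝ) ≤ (j:ℝ) - 1 := by
            have : (i:ℝ) ≤ ((j-1:ℕ):ℝ) := by exact_mod_cast hi.2
            rw [Nat.cast_sub hj] at this
            simpa using this
          have hji : 0 < (j:ℝ) - i := by linarith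
          positivity
      _ = (Real.sqrt 2 / Real.sqrt j) * ∑ i ∈ Finset.Icc 1 (j-1), (Real.exp (θ*i) / Real.sqrt ((j:ℝ)-i)) := by
          rw [Finset.mul_sum]
      _ = (Real.sqrt 2 / Real.sqrt j) * ∑ s ∈ Finset.Icc 1 (j-1), Real.exp (θ*((j:ℝ)-s)) / Real.sqrt s := by
          rw [reindex]
      _ ≤ (Real.sqrt 2 / Real.sqrt j) * (Real.exp (θ*j) * (5 / Real.sqrt θ)) := by
          apply mul_le_mul_of_nonneg_left _ (by positivity)
          have e3 : ∀ s : ℕ, Real.exp (θ*((j:ℝ)-s)) = Real.exp (θ*j) * Real.exp (-θ*s) := by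
            intro s; rw [← Real.exp_add]; ring_nf
          calc ∑ s ∈ Finset.Icc 1 (j-1), Real.exp (θ*((j:ℝ)-s)) / Real.sqrt s
              = Real.exp (θ*j) * ∑ s ∈ Finset.Icc 1 (j-1), Real.exp (-θ*s) / Real.sqrt s := by
                rw [Finset.mul_sum]
                apply Finset.sum_congr rfl
                intro s _
                rw [e3 s]; ring
            _ ≤ Real.exp (θ*j) * (5 / Real.sqrt θ) := by
                apply mul_le_mul_of_nonneg_left (sum_exp_inv_sqrt_le hθ (j-1)) (by positivity)
      _ ≤ 8 * Real.exp (θ*j) / Real.sqrt (θ*j) := by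
          rw [sqrtθj]
          have hexp : 0 < Real.exp (θ*j) := Real.exp_pos _
          have h22 : Real.sqrt 2 ≤ 1.5 := by
            rw [show (1.5:ℝ) = Real.sqrt (1.5^2) from (Real.sqrt_sq (by norm_num)).symm]
            apply Real.sqrt_le_sqrt; norm_num
          have e4 : (Real.sqrt 2 / Real.sqrt j) * (Real.exp (θ*j) * (5 / Real.sqrt θ))
              = (5*Real.sqrt 2) * Real.exp (θ*j) / (Real.sqrt θ * Real.sqrt j) := by ring
          rw [e4]
          apply div_le_div_of_nonneg_right ?_ (by positivity)
          nlinarith [hexp]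
  have hsum : 3 * Real.exp (θ*j) / Real.sqrt (θ*j) + 8 * Real.exp (θ*j) / Real.sqrt (θ*j)
      = 11 * Real.exp (θ*j) / Real.sqrt (θ*j) := by ring
  linarith

/-- (A4) -/
lemma final_conv (m : ℕ) :
    ∑ j ∈ Finset.Icc 1 m, 1 / (Real.sqrt j * Real.sqrt ((m:ℝ)+1-j)) ≤ 6 := by
  have hm1 : (0:ℝ) < (m:ℝ)+1 := by positivity
  have hsm : 0 < Real.sqrt ((m:ℝ)+1) := Real.sqrt_pos.mpr hm1
  rw [← Finset.sum_filter_add_sum_filter_not (Finset.Icc 1 m) (fun j => 2*j ≤ m+1)]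
  have sqrtm : Real.sqrt m ≤ Real.sqrt ((m:ℝ)+1) := Real.sqrt_le_sqrt (by linarith)
  have part1 : ∑ j ∈ (Finset.Icc 1 m).filter (fun j => 2*j ≤ m+1), 1 / (Real.sqrt j * Real.sqrt ((m:ℝ)+1-j)) ≤ 3 := by
    have hb : ∀ j ∈ (Finset.Icc 1 m).filter (fun j => 2*j ≤ m+1),
        1 / (Real.sqrt j * Real.sqrt ((m:ℝ)+1-j)) ≤ (Real.sqrt 2/Real.sqrt ((m:ℝ)+1)) * (1/Real.sqrt j) := by
      intro i hi
      simp only [Finset.mem_filter, Finset.mem_Icc] at hi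
      obtain ⟨⟨hi1, hi2⟩, hi3⟩ := hi
      have hiR : (1:ℝ) ≤ (i:ℝ) := by exact_mod_cast hi1
      have hi2R : (i:ℝ) ≤ (m:ℝ) := by exact_mod_cast hi2
      have hi3R : 2*(i:ℝ) ≤ (m:ℝ)+1 := by exact_mod_cast hi3
      have hji : 0 < (m:ℝ)+1-i := by linarith
      have h2 : 1 / Real.sqrt ((m:ℝ)+1-i) ≤ Real.sqrt 2 / Real.sqrt ((m:ℝ)+1) := by
        apply inv_sqrt_half hji hm1 (by linarith)
      calc 1 / (Real.sqrt i * Real.sqrt ((m:ℝ)+1-i))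
          = (1/Real.sqrt ((m:ℝ)+1-i)) * (1/Real.sqrt i) := by
            field_simp; try ring
        _ ≤ (Real.sqrt 2/Real.sqrt ((m:ℝ)+1)) * (1/Real.sqrt i) := by
            apply mul_le_mul_of_nonneg_right h2 (by positivity)
    calc ∑ j ∈ (Finset.Icc 1 m).filter (fun j => 2*j ≤ m+1), 1 / (Real.sqrt j * Real.sqrt ((m:ℝ)+1-j))
        ≤ ∑ j ∈ (Finset.Icc 1 m).filter (fun j => 2*j ≤ m+1), (Real.sqrt 2/Real.sqrt ((m:ℝ)+1)) * (1/Real.sqrt j) :=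
          Finset.sum_le_sum hb
      _ = (Real.sqrt 2/Real.sqrt ((m:ℝ)+1)) * ∑ j ∈ (Finset.Icc 1 m).filter (fun j => 2*j ≤ m+1), (1/Real.sqrt j) := by
          rw [Finset.mul_sum]
      _ ≤ (Real.sqrt 2/Real.sqrt ((m:ℝ)+1)) * (2*Real.sqrt ((m:ℝ)+1)) := by
          apply mul_le_mul_of_nonneg_left _ (by positivity)
          calc ∑ j ∈ (Finset.Icc 1 m).filter (fun j => 2*j ≤ m+1), (1/Real.sqrt j)
              ≤ ∑ j ∈ Finset.Icc 1 m, (1/Real.sqrt j) := by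
                apply Finset.sum_le_sum_of_subset_of_nonneg (Finset.filter_subset _ _)
                intro i _ _; positivity
            _ ≤ 2 * Real.sqrt m := sum_inv_sqrt_le m
            _ ≤ 2 * Real.sqrt ((m:ℝ)+1) := by linarith
      _ = 2 * Real.sqrt 2 := by field_simp; try ring
      _ ≤ 3 := by
          nlinarith [Real.sq_sqrt (by norm_num : (0:ℝ) ≤ 2), Real.sqrt_nonneg 2]
  have part2 : ∑ j ∈ (Finset.Icc 1 m).filter (fun j => ¬ 2*j ≤ m+1), 1 / (Real.sqrt j * Real.sqrt ((m:ℝ)+1-j)) ≤ 3 := by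
    have hb : ∀ j ∈ (Finset.Icc 1 m).filter (fun j => ¬ 2*j ≤ m+1),
        1 / (Real.sqrt j * Real.sqrt ((m:ℝ)+1-j)) ≤ (Real.sqrt 2/Real.sqrt ((m:ℝ)+1)) * (1/Real.sqrt ((m:ℝ)+1-j)) := by
      intro i hi
      simp only [Finset.mem_filter, Finset.mem_Icc] at hi
      obtain ⟨⟨hi1, hi2⟩, hi3⟩ := hi
      have hiR : (1:ℝ) ≤ (i:ℝ) := by exact_mod_cast hi1
      have hi2R : (i:ℝ) ≤ (m:ℝ) := by exact_mod_cast hi2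
      have hi3R : (m:ℝ)+1 ≤ 2*(i:ℝ) := by
        have : m+1 ≤ 2*i := by omega
        exact_mod_cast this
      have hji : 0 < (m:ℝ)+1-i := by linarith
      have h2 : 1 / Real.sqrt i ≤ Real.sqrt 2 / Real.sqrt ((m:ℝ)+1) := by
        apply inv_sqrt_half (by linarith) hm1 (by linarith)
      calc 1 / (Real.sqrt i * Real.sqrt ((m:ℝ)+1-i))
          = (1/Real.sqrt i) * (1/Real.sqrt ((m:ℝ)+1-i)) := by
            field_simp; try ring
        _ ≤ (Real.sqrt 2/Real.sqrt ((m:ℝ)+1)) * (1/Real.sqrt ((m:ℝ)+1-i)) := by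
            apply mul_le_mul_of_nonneg_right h2 (by positivity)
    have reindex : ∑ j ∈ Finset.Icc 1 m, (1:ℝ) / Real.sqrt ((m:ℝ)+1-j)
        = ∑ s ∈ Finset.Icc 1 m, 1 / Real.sqrt s := by
      apply Finset.sum_nbij' (i := fun i => m + 1 - i) (j := fun s => m + 1 - s)
      · intro a ha; simp only [Finset.mem_Icc] at *; omega
      · intro a ha; simp only [Finset.mem_Icc] at *; omega
      · intro a ha; simp only [Finset.mem_Icc] at ha; omega
      · intro a ha; simp only [Finset.mem_Icc] at ha; omega
      · intro a ha
        simp only [Finset.mem_Icc] at ha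
        congr 2
        rw [Nat.cast_sub (by omega)]
        push_cast
        ring
    calc ∑ j ∈ (Finset.Icc 1 m).filter (fun j => ¬ 2*j ≤ m+1), 1 / (Real.sqrt j * Real.sqrt ((m:ℝ)+1-j))
        ≤ ∑ j ∈ (Finset.Icc 1 m).filter (fun j => ¬ 2*j ≤ m+1), (Real.sqrt 2/Real.sqrt ((m:ℝ)+1)) * (1/Real.sqrt ((m:ℝ)+1-j)) :=
          Finset.sum_le_sum hb
      _ ≤ ∑ j ∈ Finset.Icc 1 m, (Real.sqrt 2/Real.sqrt ((m:ℝ)+1)) * (1/Real.sqrt ((m:ℝ)+1-j)) := by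
          apply Finset.sum_le_sum_of_subset_of_nonneg (Finset.filter_subset _ _)
          intro i hi _
          simp only [Finset.mem_Icc] at hi
          have hi2R : (i:ℝ) ≤ (m:ℝ) := by exact_mod_cast hi.2
          have hji : 0 < (m:ℝ)+1-i := by linarith
          positivity
      _ = (Real.sqrt 2/Real.sqrt ((m:ℝ)+1)) * ∑ j ∈ Finset.Icc 1 m, ((1:ℝ)/Real.sqrt ((m:ℝ)+1-j)) := by
          rw [Finset.mul_sum]
      _ = (Real.sqrt 2/Real.sqrt ((m:ℝ)+1)) * ∑ s ∈ Finset.Icc 1 m, ((1:ℝ)/Real.sqrt s) := by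
          rw [reindex]
      _ ≤ (Real.sqrt 2/Real.sqrt ((m:ℝ)+1)) * (2*Real.sqrt ((m:ℝ)+1)) := by
          apply mul_le_mul_of_nonneg_left _ (by positivity)
          calc ∑ s ∈ Finset.Icc 1 m, ((1:ℝ)/Real.sqrt s) ≤ 2*Real.sqrt m := sum_inv_sqrt_le m
            _ ≤ 2*Real.sqrt ((m:ℝ)+1) := by linarith
      _ = 2 * Real.sqrt 2 := by field_simp; try ring
      _ ≤ 3 := by
          nlinarith [Real.sq_sqrt (by norm_num : (0:ℝ) ≤ 2), Real.sqrt_nonneg 2]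
  linarith

/-! ### The weighted counting quantities -/

noncomputable def VV (m : ℕ) (y : ℤ) (j : ℕ) (S : Finset ℕ) : ℝ :=
  (1/4^j) * (1/2^(m-j)) * ∑ ε : Fin j → Bool, ∑ η : Fin m → Bool,
    (if (∀ i ∈ S, walkOf ε i = walkOf η i) ∧ walkOf η m = y then (1:ℝ) else 0)

noncomputable def WW (m : ℕ) (x y : ℤ) (S : Finset ℕ) : ℝ :=
  (1/4^m) * ∑ ε : Fin m → Bool, ∑ η : Fin m → Bool,
    (if (∀ i ∈ S, walkOf ε i = walkOf η i) ∧ walkOf ε m = x ∧ walkOf η m = y then (1:ℝ) else 0)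

noncomputable def aB (g : ℕ) : ℝ := Real.sqrt 2 / Real.sqrt (g+1)

lemma aB_nonneg (g : ℕ) : 0 ≤ aB g := by unfold aB; positivity

lemma aB_pos (g : ℕ) : 0 < aB g := by
  unfold aB
  apply div_pos (Real.sqrt_pos.mpr (by norm_num)) (Real.sqrt_pos.mpr (by positivity))

lemma VV_nonneg (m : ℕ) (y : ℤ) (j : ℕ) (S : Finset ℕ) : 0 ≤ VV m y j S := by
  unfold VV
  apply mul_nonneg (by positivity)
  apply Finset.sum_nonneg
  intro ε _
  apply Finset.sum_nonneg
  intro η _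
  split_ifs <;> norm_num

lemma cntW_le' (n : ℕ) (z : ℤ) : (cntW n z : ℝ) ≤ aB n * 2^n := by
  have := cntW_le n z
  unfold aB
  calc (cntW n z : ℝ) ≤ Real.sqrt 2 * 2^n / Real.sqrt (n+1) := this
    _ = Real.sqrt 2 / Real.sqrt ((n:ℝ)+1) * 2^n := by ring

lemma ite_and_mul (P Q : Prop) [Decidable P] [Decidable Q] :
    (if P ∧ Q then (1:ℝ) else 0) = (if P then (1:ℝ) else 0) * (if Q then (1:ℝ) else 0) := by
  by_cases hP : P <;> by_cases hQ : Q <;> simp [hP, hQ]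

lemma iteone_nonneg (P : Prop) [Decidable P] : (0:ℝ) ≤ if P then (1:ℝ) else 0 := by
  split_ifs <;> norm_num

/-- Split lemma for `WW`. -/
lemma WW_le (m : ℕ) (x y : ℤ) {j : ℕ} (hj : j ≤ m) (S : Finset ℕ) (hS : ∀ i ∈ S, i ≤ j) :
    WW m x y S ≤ aB (m-j) * VV m y j S := by
  unfold WW VV
  rw [sum_glue hj]
  have step1 : ∀ ε₁ : Fin j → Bool, ∀ ε₂ : Fin (m-j) → Bool, ∀ η : Fin m → Bool,
      (if (∀ i ∈ S, walkOf (glue j m ε₁ ε₂) i = walkOf η i) ∧ walkOf (glue j m ε₁ ε₂) m = x ∧ walkOf η m = y then (1:ℝ) else 0)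
      = (if (∀ i ∈ S, walkOf ε₁ i = walkOf η i) ∧ walkOf η m = y then (1:ℝ) else 0)
        * (if walkOf ε₂ (m-j) = x - walkOf ε₁ j then (1:ℝ) else 0) := by
    intro ε₁ ε₂ η
    rw [← ite_and_mul]
    apply if_congr _ rfl rfl
    have e2 := walkOf_glue_last hj ε₁ ε₂
    constructor
    · rintro ⟨h1, h2, h3⟩
      rw [e2] at h2
      exact ⟨⟨fun i hi => by rw [← walkOf_glue_of_le hj (hS i hi) ε₁ ε₂]; exact h1 i hi, h3⟩, by omega⟩
    · rintro ⟨⟨h1, h3⟩, h2⟩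
      refine ⟨fun i hi => by rw [walkOf_glue_of_le hj (hS i hi) ε₁ ε₂]; exact h1 i hi, ?_, h3⟩
      rw [e2]; omega
  have step2 : ∀ ε₁ : Fin j → Bool,
      ∑ ε₂ : Fin (m-j) → Bool, ∑ η : Fin m → Bool,
        (if (∀ i ∈ S, walkOf (glue j m ε₁ ε₂) i = walkOf η i) ∧ walkOf (glue j m ε₁ ε₂) m = x ∧ walkOf η m = y then (1:ℝ) else 0)
      ≤ (aB (m-j) * 2^(m-j)) * ∑ η : Fin m → Bool,
          (if (∀ i ∈ S, walkOf ε₁ i = walkOf η i) ∧ walkOf η m = y then (1:ℝ) else 0) := by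
    intro ε₁
    rw [Finset.sum_comm]
    calc ∑ η : Fin m → Bool, ∑ ε₂ : Fin (m-j) → Bool,
          (if (∀ i ∈ S, walkOf (glue j m ε₁ ε₂) i = walkOf η i) ∧ walkOf (glue j m ε₁ ε₂) m = x ∧ walkOf η m = y then (1:ℝ) else 0)
        = ∑ η : Fin m → Bool,
            (if (∀ i ∈ S, walkOf ε₁ i = walkOf η i) ∧ walkOf η m = y then (1:ℝ) else 0) * (cntW (m-j) (x - walkOf ε₁ j) : ℝ) := by
          apply Finset.sum_congr rfl
          intro η _
          rw [Finset.sum_congr rfl (fun ε₂ _ => step1 ε₁ ε₂ η), ← Finset.mul_sum]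
          congr 1
          rw [Finset.sum_boole]
          rfl
      _ ≤ ∑ η : Fin m → Bool,
            (if (∀ i ∈ S, walkOf ε₁ i = walkOf η i) ∧ walkOf η m = y then (1:ℝ) else 0) * (aB (m-j) * 2^(m-j)) := by
          apply Finset.sum_le_sum
          intro η _
          exact mul_le_mul_of_nonneg_left (cntW_le' _ _) (iteone_nonneg _)
      _ = (aB (m-j) * 2^(m-j)) * ∑ η : Fin m → Bool,
            (if (∀ i ∈ S, walkOf ε₁ i = walkOf η i) ∧ walkOf η m = y then (1:ℝ) else 0) := by
          rw [← Finset.sum_mul]; ring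
  have hpow : (1:ℝ)/4^m * (aB (m-j) * 2^(m-j)) = aB (m-j) * (1/4^j * (1/2^(m-j))) := by
    have h1 : (4:ℝ)^m = 4^j * 4^(m-j) := by
      rw [← pow_add]; congr 1; omega
    have h2 : (4:ℝ)^(m-j) = 2^(m-j) * 2^(m-j) := by
      rw [← mul_pow]; norm_num
    rw [h1, h2]
    have h3 : (0:ℝ) < 2^(m-j) := by positivity
    have h4 : (0:ℝ) < 4^j := by positivity
    field_simp
  calc (1:ℝ)/4^m * ∑ ε₁ : Fin j → Bool, ∑ ε₂ : Fin (m-j) → Bool, ∑ η : Fin m → Bool,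
        (if (∀ i ∈ S, walkOf (glue j m ε₁ ε₂) i = walkOf η i) ∧ walkOf (glue j m ε₁ ε₂) m = x ∧ walkOf η m = y then (1:ℝ) else 0)
      ≤ (1:ℝ)/4^m * ∑ ε₁ : Fin j → Bool, (aB (m-j) * 2^(m-j)) * ∑ η : Fin m → Bool,
          (if (∀ i ∈ S, walkOf ε₁ i = walkOf η i) ∧ walkOf η m = y then (1:ℝ) else 0) := by
        apply mul_le_mul_of_nonneg_left _ (by positivity)
        exact Finset.sum_le_sum (fun ε₁ _ => step2 ε₁)
    _ = aB (m-j) * ((1/4^j) * (1/2^(m-j)) * ∑ ε₁ : Fin j → Bool, ∑ η : Fin m → Bool,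
          (if (∀ i ∈ S, walkOf ε₁ i = walkOf η i) ∧ walkOf η m = y then (1:ℝ) else 0)) := by
        rw [← Finset.mul_sum]
        rw [show ((1:ℝ)/4^m) * ((aB (m-j) * 2^(m-j)) * ∑ ε₁ : Fin j → Bool, ∑ η : Fin m → Bool,
          (if (∀ i ∈ S, walkOf ε₁ i = walkOf η i) ∧ walkOf η m = y then (1:ℝ) else 0))
          = ((1:ℝ)/4^m * (aB (m-j) * 2^(m-j))) * ∑ ε₁ : Fin j → Bool, ∑ η : Fin m → Bool,
          (if (∀ i ∈ S, walkOf ε₁ i = walkOf η i) ∧ walkOf η m = y then (1:ℝ) else 0) from by ring]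
        rw [hpow]
        ring

/-- Split lemma for `VV`. -/
lemma VV_le (m : ℕ) (y : ℤ) {i j : ℕ} (hij : i ≤ j) (hjm : j ≤ m) (S : Finset ℕ)
    (hS : ∀ t ∈ S, t ≤ i) :
    VV m y j (insert j S) ≤ aB (j-i) * VV m y i S := by
  unfold VV
  rw [sum_glue hij]
  have step1 : ∀ ε₁ : Fin i → Bool, ∀ ε₂ : Fin (j-i) → Bool, ∀ η : Fin m → Bool,
      (if (∀ t ∈ insert j S, walkOf (glue i j ε₁ ε₂) t = walkOf η t) ∧ walkOf η m = y then (1:ℝ) else 0)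
      = (if (∀ t ∈ S, walkOf ε₁ t = walkOf η t) ∧ walkOf η m = y then (1:ℝ) else 0)
        * (if walkOf ε₂ (j-i) = walkOf η j - walkOf ε₁ i then (1:ℝ) else 0) := by
    intro ε₁ ε₂ η
    rw [← ite_and_mul]
    apply if_congr _ rfl rfl
    have e2 := walkOf_glue_last hij ε₁ ε₂
    constructor
    · rintro ⟨h1, h3⟩
      have hj' := h1 j (Finset.mem_insert_self j S)
      rw [e2] at hj'
      refine ⟨⟨fun t ht => ?_, h3⟩, by omega⟩
      rw [← walkOf_glue_of_le hij (hS t ht) ε₁ ε₂]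
      exact h1 t (Finset.mem_insert_of_mem ht)
    · rintro ⟨⟨h1, h3⟩, h2⟩
      refine ⟨fun t ht => ?_, h3⟩
      rcases Finset.mem_insert.mp ht with h | h
      · subst h
        rw [e2]; omega
      · rw [walkOf_glue_of_le hij (hS t h) ε₁ ε₂]
        exact h1 t h
  have step2 : ∀ ε₁ : Fin i → Bool,
      ∑ ε₂ : Fin (j-i) → Bool, ∑ η : Fin m → Bool,
        (if (∀ t ∈ insert j S, walkOf (glue i j ε₁ ε₂) t = walkOf η t) ∧ walkOf η m = y then (1:ℝ) else 0)
      ≤ (aB (j-i) * 2^(j-i)) * ∑ η : Fin m → Bool,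
          (if (∀ t ∈ S, walkOf ε₁ t = walkOf η t) ∧ walkOf η m = y then (1:ℝ) else 0) := by
    intro ε₁
    rw [Finset.sum_comm]
    calc ∑ η : Fin m → Bool, ∑ ε₂ : Fin (j-i) → Bool,
          (if (∀ t ∈ insert j S, walkOf (glue i j ε₁ ε₂) t = walkOf η t) ∧ walkOf η m = y then (1:ℝ) else 0)
        = ∑ η : Fin m → Bool,
            (if (∀ t ∈ S, walkOf ε₁ t = walkOf η t) ∧ walkOf η m = y then (1:ℝ) else 0) * (cntW (j-i) (walkOf η j - walkOf ε₁ i) : ℝ) := by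
          apply Finset.sum_congr rfl
          intro η _
          rw [Finset.sum_congr rfl (fun ε₂ _ => step1 ε₁ ε₂ η), ← Finset.mul_sum]
          congr 1
          rw [Finset.sum_boole]
          rfl
      _ ≤ ∑ η : Fin m → Bool,
            (if (∀ t ∈ S, walkOf ε₁ t = walkOf η t) ∧ walkOf η m = y then (1:ℝ) else 0) * (aB (j-i) * 2^(j-i)) := by
          apply Finset.sum_le_sum
          intro η _
          exact mul_le_mul_of_nonneg_left (cntW_le' _ _) (iteone_nonneg _)
      _ = (aB (j-i) * 2^(j-i)) * ∑ η : Fin m → Bool,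
            (if (∀ t ∈ S, walkOf ε₁ t = walkOf η t) ∧ walkOf η m = y then (1:ℝ) else 0) := by
          rw [← Finset.sum_mul]; ring
  have hpow : (1:ℝ)/4^j * (1/2^(m-j)) * (aB (j-i) * 2^(j-i)) = aB (j-i) * (1/4^i * (1/2^(m-i))) := by
    have h1 : (4:ℝ)^j = 4^i * 4^(j-i) := by
      rw [← pow_add]; congr 1; omega
    have h2 : (4:ℝ)^(j-i) = 2^(j-i) * 2^(j-i) := by
      rw [← mul_pow]; norm_num
    have h3 : (2:ℝ)^(m-i) = 2^(m-j) * 2^(j-i) := by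
      rw [← pow_add]; congr 1; omega
    rw [h1, h2, h3]
    have p1 : (0:ℝ) < 2^(m-j) := by positivity
    have p2 : (0:ℝ) < 2^(j-i) := by positivity
    have p3 : (0:ℝ) < 4^i := by positivity
    field_simp
  calc (1:ℝ)/4^j * (1/2^(m-j)) * ∑ ε₁ : Fin i → Bool, ∑ ε₂ : Fin (j-i) → Bool, ∑ η : Fin m → Bool,
        (if (∀ t ∈ insert j S, walkOf (glue i j ε₁ ε₂) t = walkOf η t) ∧ walkOf η m = y then (1:ℝ) else 0)
      ≤ (1:ℝ)/4^j * (1/2^(m-j)) * ∑ ε₁ : Fin i → Bool, (aB (j-i) * 2^(j-i)) * ∑ η : Fin m → Bool,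
          (if (∀ t ∈ S, walkOf ε₁ t = walkOf η t) ∧ walkOf η m = y then (1:ℝ) else 0) := by
        apply mul_le_mul_of_nonneg_left _ (by positivity)
        exact Finset.sum_le_sum (fun ε₁ _ => step2 ε₁)
    _ = aB (j-i) * ((1/4^i) * (1/2^(m-i)) * ∑ ε₁ : Fin i → Bool, ∑ η : Fin m → Bool,
          (if (∀ t ∈ S, walkOf ε₁ t = walkOf η t) ∧ walkOf η m = y then (1:ℝ) else 0)) := by
        rw [← Finset.mul_sum]
        rw [show ((1:ℝ)/4^j * (1/2^(m-j))) * ((aB (j-i) * 2^(j-i)) * ∑ ε₁ : Fin i → Bool, ∑ η : Fin m → Bool,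
          (if (∀ t ∈ S, walkOf ε₁ t = walkOf η t) ∧ walkOf η m = y then (1:ℝ) else 0))
          = ((1:ℝ)/4^j * (1/2^(m-j)) * (aB (j-i) * 2^(j-i))) * ∑ ε₁ : Fin i → Bool, ∑ η : Fin m → Bool,
          (if (∀ t ∈ S, walkOf ε₁ t = walkOf η t) ∧ walkOf η m = y then (1:ℝ) else 0) from by ring]
        rw [hpow]
        ring

/-- Chaos expansion of the collision weight. -/
lemma expand (σ : ℝ) (m : ℕ) (ε η : Fin m → Bool) :
    (1+σ)^(collisions m ε η)
      = ∑ A ∈ (Finset.Icc 1 m).powerset, σ^A.card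
          * (if ∀ i ∈ A, walkOf ε i = walkOf η i then (1:ℝ) else 0) := by
  have h0 : (1+σ)^(collisions m ε η)
      = ∏ i ∈ Finset.Icc 1 m, (if walkOf ε i = walkOf η i then 1+σ else 1) := by
    rw [Finset.prod_ite, Finset.prod_const, Finset.prod_const, one_pow, mul_one]
    rfl
  have h1 : ∀ i ∈ Finset.Icc 1 m, (if walkOf ε i = walkOf η i then 1+σ else 1)
      = (if walkOf ε i = walkOf η i then σ else 0) + 1 := by
    intro i _
    split_ifs <;> ring
  rw [h0, Finset.prod_congr rfl h1, Finset.prod_add]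
  apply Finset.sum_congr rfl
  intro A hA
  rw [Finset.prod_const_one, mul_one]
  by_cases hall : ∀ i ∈ A, walkOf ε i = walkOf η i
  · rw [if_pos hall]
    rw [Finset.prod_congr rfl (fun i hi => if_pos (hall i hi)), Finset.prod_const]
    ring
  · rw [if_neg hall, mul_zero]
    push_neg at hall
    obtain ⟨i, hi, hne⟩ := hall
    exact Finset.prod_eq_zero hi (if_neg hne)

lemma Icc_succ_right' (m : ℕ) : Finset.Icc 1 (m+1) = insert (m+1) (Finset.Icc 1 m) := by
  ext a; simp only [Finset.mem_Icc, Finset.mem_insert]; omega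

lemma sum_powerset_Icc (m : ℕ) (F : Finset ℕ → ℝ) :
    ∑ A ∈ (Finset.Icc 1 m).powerset, F A
      = F ∅ + ∑ j ∈ Finset.Icc 1 m, ∑ B ∈ (Finset.Icc 1 (j-1)).powerset, F (insert j B) := by
  induction m with
  | zero =>
    rw [show Finset.Icc 1 0 = (∅ : Finset ℕ) from by simp]
    simp
  | succ m ih =>
    rw [Icc_succ_right', Finset.sum_powerset_insert (by simp only [Finset.mem_Icc]; omega), ih]
    rw [Finset.sum_insert (by simp only [Finset.mem_Icc]; omega)]
    rw [show (m+1) - 1 = m from rfl]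
    ring

noncomputable def EE (σ : ℝ) (m : ℕ) (y : ℤ) (j : ℕ) : ℝ :=
  if j = 0 then VV m y 0 ∅
  else ∑ B ∈ (Finset.Icc 1 (j-1)).powerset, σ^(B.card+1) * VV m y j (insert j B)

lemma EE_zero (σ : ℝ) (m : ℕ) (y : ℤ) : EE σ m y 0 = VV m y 0 ∅ := by simp [EE]

lemma EE_nonneg (σ : ℝ) (hσ : 0 < σ) (m : ℕ) (y : ℤ) (j : ℕ) : 0 ≤ EE σ m y j := by
  unfold EE
  split_ifs
  · exact VV_nonneg m y 0 ∅
  · apply Finset.sum_nonneg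
    intro B _
    exact mul_nonneg (by positivity) (VV_nonneg _ _ _ _)

/-- Main decomposition: the weighted two-walk sum is controlled by the `EE j`. -/
lemma Z_le (σ : ℝ) (hσ : 0 < σ) (m : ℕ) (x y : ℤ) :
    (1/4^m) * ∑ ε : Fin m → Bool, ∑ η : Fin m → Bool,
      (if walkOf ε m = x ∧ walkOf η m = y then (1+σ)^(collisions m ε η) else (0:ℝ))
    ≤ aB m * EE σ m y 0 + ∑ j ∈ Finset.Icc 1 m, aB (m-j) * EE σ m y j := by
  have hswap : ∑ ε : Fin m → Bool, ∑ η : Fin m → Bool,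
      (if walkOf ε m = x ∧ walkOf η m = y then (1+σ)^(collisions m ε η) else (0:ℝ))
      = ∑ A ∈ (Finset.Icc 1 m).powerset, σ^A.card * ∑ ε : Fin m → Bool, ∑ η : Fin m → Bool,
          (if (∀ i ∈ A, walkOf ε i = walkOf η i) ∧ walkOf ε m = x ∧ walkOf η m = y then (1:ℝ) else 0) := by
    have e2 : ∀ ε η : Fin m → Bool,
        (if walkOf ε m = x ∧ walkOf η m = y then (1+σ)^(collisions m ε η) else (0:ℝ))
        = ∑ A ∈ (Finset.Icc 1 m).powerset, σ^A.card *
            (if (∀ i ∈ A, walkOf ε i = walkOf η i) ∧ walkOf ε m = x ∧ walkOf η m = y then (1:ℝ) else 0) := by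
      intro ε η
      have e1 : (if walkOf ε m = x ∧ walkOf η m = y then (1+σ)^(collisions m ε η) else (0:ℝ))
          = (1+σ)^(collisions m ε η) * (if walkOf ε m = x ∧ walkOf η m = y then (1:ℝ) else 0) := by
        split_ifs <;> ring
      rw [e1, expand σ m ε η, Finset.sum_mul]
      apply Finset.sum_congr rfl
      intro A hA
      rw [ite_and_mul (∀ i ∈ A, walkOf ε i = walkOf η i) (walkOf ε m = x ∧ walkOf η m = y),
          ite_and_mul (walkOf ε m = x) (walkOf η m = y)]
      ring
    rw [Finset.sum_congr rfl (fun ε _ => Finset.sum_congr rfl (fun η _ => e2 ε η))]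
    rw [Finset.sum_congr rfl (fun ε (_ : ε ∈ Finset.univ) => Finset.sum_comm)]
    rw [Finset.sum_comm]
    apply Finset.sum_congr rfl
    intro A _
    rw [Finset.mul_sum]
    apply Finset.sum_congr rfl
    intro ε _
    rw [Finset.mul_sum]
  have hZexp : (1/4^m) * ∑ ε : Fin m → Bool, ∑ η : Fin m → Bool,
      (if walkOf ε m = x ∧ walkOf η m = y then (1+σ)^(collisions m ε η) else (0:ℝ))
      = ∑ A ∈ (Finset.Icc 1 m).powerset, σ^A.card * WW m x y A := by
    rw [hswap, Finset.mul_sum]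
    apply Finset.sum_congr rfl
    intro A _
    unfold WW
    ring
  rw [hZexp]
  rw [sum_powerset_Icc m (fun A => σ^A.card * WW m x y A)]
  have hterm0 : σ^(∅:Finset ℕ).card * WW m x y ∅ ≤ aB m * EE σ m y 0 := by
    rw [Finset.card_empty, pow_zero, one_mul, EE_zero]
    have := WW_le m x y (Nat.zero_le m) ∅ (by simp)
    simpa using this
  have hterm : ∀ j ∈ Finset.Icc 1 m,
      ∑ B ∈ (Finset.Icc 1 (j-1)).powerset, σ^(insert j B).card * WW m x y (insert j B)
      ≤ aB (m-j) * EE σ m y j := by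
    intro j hj
    simp only [Finset.mem_Icc] at hj
    have hj0 : j ≠ 0 := by omega
    rw [EE, if_neg hj0, Finset.mul_sum]
    apply Finset.sum_le_sum
    intro B hB
    rw [Finset.mem_powerset] at hB
    have hjB : j ∉ B := by
      intro h
      have := hB h
      simp only [Finset.mem_Icc] at this
      omega
    rw [Finset.card_insert_of_notMem hjB]
    have hWle : WW m x y (insert j B) ≤ aB (m-j) * VV m y j (insert j B) := by
      apply WW_le m x y hj.2
      intro i hi
      rcases Finset.mem_insert.mp hi with h | h
      · omega
      · have := hB h
        simp only [Finset.mem_Icc] at this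
        omega
    calc σ^(B.card+1) * WW m x y (insert j B)
        ≤ σ^(B.card+1) * (aB (m-j) * VV m y j (insert j B)) :=
          mul_le_mul_of_nonneg_left hWle (by positivity)
      _ = aB (m-j) * (σ^(B.card+1) * VV m y j (insert j B)) := by ring
  calc σ^(∅:Finset ℕ).card * WW m x y ∅
        + ∑ j ∈ Finset.Icc 1 m, ∑ B ∈ (Finset.Icc 1 (j-1)).powerset, σ^(insert j B).card * WW m x y (insert j B)
      ≤ aB m * EE σ m y 0 + ∑ j ∈ Finset.Icc 1 m, aB (m-j) * EE σ m y j := by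
        apply add_le_add hterm0
        exact Finset.sum_le_sum hterm

/-- Renewal-type recursion for `EE`. -/
lemma EE_rec (σ : ℝ) (hσ : 0 < σ) (m : ℕ) (y : ℤ) {j : ℕ} (hj1 : 1 ≤ j) (hjm : j ≤ m) :
    EE σ m y j ≤ σ * (aB j * EE σ m y 0 + ∑ i ∈ Finset.Icc 1 (j-1), aB (j-i) * EE σ m y i) := by
  have hj0 : j ≠ 0 := by omega
  rw [EE, if_neg hj0]
  rw [sum_powerset_Icc (j-1) (fun B => σ^(B.card+1) * VV m y j (insert j B))]
  have hterm0 : σ^((∅:Finset ℕ).card+1) * VV m y j (insert j ∅) ≤ σ * (aB j * EE σ m y 0) := by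
    rw [EE_zero]
    have h := VV_le m y (Nat.zero_le j) hjm ∅ (by simp)
    rw [Nat.sub_zero] at h
    calc σ^((∅:Finset ℕ).card+1) * VV m y j (insert j ∅) = σ * VV m y j (insert j ∅) := by
          rw [Finset.card_empty]; ring
      _ ≤ σ * (aB j * VV m y 0 ∅) := mul_le_mul_of_nonneg_left h (le_of_lt hσ)
  have hterm : ∀ i ∈ Finset.Icc 1 (j-1),
      ∑ B ∈ (Finset.Icc 1 (i-1)).powerset, σ^((insert i B).card+1) * VV m y j (insert j (insert i B))
      ≤ σ * (aB (j-i) * EE σ m y i) := by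
    intro i hi
    simp only [Finset.mem_Icc] at hi
    have hi0 : i ≠ 0 := by omega
    rw [EE, if_neg hi0, Finset.mul_sum, Finset.mul_sum]
    apply Finset.sum_le_sum
    intro B hB
    rw [Finset.mem_powerset] at hB
    have hiB : i ∉ B := by
      intro h
      have := hB h
      simp only [Finset.mem_Icc] at this
      omega
    rw [Finset.card_insert_of_notMem hiB]
    have hVle : VV m y j (insert j (insert i B)) ≤ aB (j-i) * VV m y i (insert i B) := by
      apply VV_le m y (by omega) hjm
      intro t ht
      rcases Finset.mem_insert.mp ht with h | h
      · omega
      · have := hB h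
        simp only [Finset.mem_Icc] at this
        omega
    calc σ^(B.card+1+1) * VV m y j (insert j (insert i B))
        ≤ σ^(B.card+1+1) * (aB (j-i) * VV m y i (insert i B)) :=
          mul_le_mul_of_nonneg_left hVle (by positivity)
      _ = σ * (aB (j-i) * (σ^(B.card+1) * VV m y i (insert i B))) := by ring
  calc σ^((∅:Finset ℕ).card+1) * VV m y j (insert j ∅)
        + ∑ i ∈ Finset.Icc 1 (j-1), ∑ B ∈ (Finset.Icc 1 (i-1)).powerset, σ^((insert i B).card+1) * VV m y j (insert j (insert i B))
      ≤ σ * (aB j * EE σ m y 0) + ∑ i ∈ Finset.Icc 1 (j-1), σ * (aB (j-i) * EE σ m y i) := by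
        apply add_le_add hterm0
        exact Finset.sum_le_sum hterm
    _ = σ * (aB j * EE σ m y 0 + ∑ i ∈ Finset.Icc 1 (j-1), aB (j-i) * EE σ m y i) := by
        rw [mul_add, Finset.mul_sum]

/-- Inductive bound on `EE`. -/
lemma EE_le (σ : ℝ) (hσ : 0 < σ) (m : ℕ) (y : ℤ) :
    ∀ j, 1 ≤ j → j ≤ m →
      EE σ m y j ≤ 3*σ*Real.exp (900*σ^2*j)/Real.sqrt j * EE σ m y 0 := by
  intro j
  induction j using Nat.strong_induction_on with
  | _ j IH =>
    intro hj1 hjm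
    have hE0 : 0 ≤ EE σ m y 0 := EE_nonneg σ hσ m y 0
    have hθ : (0:ℝ) < 900*σ^2 := by positivity
    have hjR : (1:ℝ) ≤ (j:ℝ) := by exact_mod_cast hj1
    have hsj : 0 < Real.sqrt j := Real.sqrt_pos.mpr (by linarith)
    have haBj : aB j ≤ Real.sqrt 2 / Real.sqrt j := by
      unfold aB
      apply div_le_div_of_nonneg_left (Real.sqrt_nonneg 2) hsj
      apply Real.sqrt_le_sqrt; linarith
    have hterm : ∀ i ∈ Finset.Icc 1 (j-1),
        aB (j-i) * EE σ m y i
          ≤ (3*Real.sqrt 2*σ) * (Real.exp ((900*σ^2)*i) / (Real.sqrt i * Real.sqrt ((j:ℝ)-i))) * EE σ m y 0 := by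
      intro i hi
      simp only [Finset.mem_Icc] at hi
      have hij : i < j := by omega
      have hiR : (1:ℝ) ≤ (i:ℝ) := by exact_mod_cast hi.1
      have hijR : (i:ℝ) < (j:ℝ) := by exact_mod_cast hij
      have hsi : 0 < Real.sqrt i := Real.sqrt_pos.mpr (by linarith)
      have hsji : 0 < Real.sqrt ((j:ℝ)-i) := Real.sqrt_pos.mpr (by linarith)
      have hcast : ((j-i : ℕ):ℝ) = (j:ℝ) - i := by
        rw [Nat.cast_sub (by omega)]
      have haB : aB (j-i) ≤ Real.sqrt 2 / Real.sqrt ((j:ℝ)-i) := by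
        unfold aB
        apply div_le_div_of_nonneg_left (Real.sqrt_nonneg 2) hsji
        apply Real.sqrt_le_sqrt
        rw [hcast]; linarith
      have hEE : EE σ m y i ≤ 3*σ*Real.exp ((900*σ^2)*i)/Real.sqrt i * EE σ m y 0 :=
        IH i hij hi.1 (by omega)
      calc aB (j-i) * EE σ m y i
          ≤ (Real.sqrt 2 / Real.sqrt ((j:ℝ)-i)) * (3*σ*Real.exp ((900*σ^2)*i)/Real.sqrt i * EE σ m y 0) := by
            apply mul_le_mul haB hEE (EE_nonneg σ hσ m y i) (by positivity)
          _ = (3*Real.sqrt 2*σ) * (Real.exp ((900*σ^2)*i) / (Real.sqrt i * Real.sqrt ((j:ℝ)-i))) * EE σ m y 0 := by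
            field_simp
    have hconv := conv_bound hθ hj1
    have hrec := EE_rec σ hσ m y hj1 hjm
    have hsqθj : Real.sqrt ((900*σ^2)*j) = (30*σ) * Real.sqrt j := by
      rw [Real.sqrt_mul (by positivity)]
      congr 1
      rw [show (900:ℝ)*σ^2 = (30*σ)^2 from by ring]
      exact Real.sqrt_sq (by positivity)
    have hsum : ∑ i ∈ Finset.Icc 1 (j-1), aB (j-i) * EE σ m y i
        ≤ (3*Real.sqrt 2*σ) * (11 * Real.exp ((900*σ^2)*j) / Real.sqrt ((900*σ^2)*j)) * EE σ m y 0 := by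
      calc ∑ i ∈ Finset.Icc 1 (j-1), aB (j-i) * EE σ m y i
          ≤ ∑ i ∈ Finset.Icc 1 (j-1),
              (3*Real.sqrt 2*σ) * (Real.exp ((900*σ^2)*i) / (Real.sqrt i * Real.sqrt ((j:ℝ)-i))) * EE σ m y 0 :=
            Finset.sum_le_sum hterm
        _ = (3*Real.sqrt 2*σ) * (∑ i ∈ Finset.Icc 1 (j-1), Real.exp ((900*σ^2)*i) / (Real.sqrt i * Real.sqrt ((j:ℝ)-i))) * EE σ m y 0 := by
            rw [← Finset.sum_mul, ← Finset.mul_sum]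
        _ ≤ (3*Real.sqrt 2*σ) * (11 * Real.exp ((900*σ^2)*j) / Real.sqrt ((900*σ^2)*j)) * EE σ m y 0 := by
            apply mul_le_mul_of_nonneg_right _ hE0
            exact mul_le_mul_of_nonneg_left hconv (by positivity)
    have hfinal : σ * (aB j * EE σ m y 0 + ∑ i ∈ Finset.Icc 1 (j-1), aB (j-i) * EE σ m y i)
        ≤ 3*σ*Real.exp ((900*σ^2)*j)/Real.sqrt j * EE σ m y 0 := by
      have hstep : aB j * EE σ m y 0 + ∑ i ∈ Finset.Icc 1 (j-1), aB (j-i) * EE σ m y i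
          ≤ (Real.sqrt 2 / Real.sqrt j) * EE σ m y 0
            + (3*Real.sqrt 2*σ) * (11 * Real.exp ((900*σ^2)*j) / Real.sqrt ((900*σ^2)*j)) * EE σ m y 0 := by
        apply add_le_add _ hsum
        exact mul_le_mul_of_nonneg_right haBj hE0
      have hexp1 : (1:ℝ) ≤ Real.exp ((900*σ^2)*j) := by
        rw [show (1:ℝ) = Real.exp 0 from (Real.exp_zero).symm]
        apply Real.exp_le_exp.mpr; positivity
      have hco : (3*Real.sqrt 2*σ) * (11 * Real.exp ((900*σ^2)*j) / Real.sqrt ((900*σ^2)*j))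
          = (33*Real.sqrt 2/30) * (Real.exp ((900*σ^2)*j) / Real.sqrt j) := by
        rw [hsqθj]
        field_simp
        ring
      have hs2 : Real.sqrt 2 ≤ 1.415 := by
        rw [show (1.415:ℝ) = Real.sqrt (1.415^2) from (Real.sqrt_sq (by norm_num)).symm]
        apply Real.sqrt_le_sqrt; norm_num
      have hkey : (Real.sqrt 2 / Real.sqrt j) + (33*Real.sqrt 2/30) * (Real.exp ((900*σ^2)*j) / Real.sqrt j)
          ≤ 3 * (Real.exp ((900*σ^2)*j) / Real.sqrt j) := by
        have h1 : Real.sqrt 2 / Real.sqrt j ≤ Real.sqrt 2 * (Real.exp ((900*σ^2)*j) / Real.sqrt j) := by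
          rw [div_eq_mul_one_div (Real.sqrt 2)]
          apply mul_le_mul_of_nonneg_left _ (Real.sqrt_nonneg 2)
          rw [one_div, div_eq_mul_inv]
          exact le_mul_of_one_le_left (by positivity) hexp1
        have h2 : Real.sqrt 2 * (Real.exp ((900*σ^2)*j) / Real.sqrt j)
            + (33*Real.sqrt 2/30) * (Real.exp ((900*σ^2)*j) / Real.sqrt j)
            ≤ 3 * (Real.exp ((900*σ^2)*j) / Real.sqrt j) := by
          have hq : Real.sqrt 2 + 33*Real.sqrt 2/30 ≤ 3 := by nlinarith [hs2, Real.sqrt_nonneg 2]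
          have hpos : (0:ℝ) ≤ Real.exp ((900*σ^2)*j) / Real.sqrt j := by positivity
          nlinarith [hq, hpos]
        linarith
      calc σ * (aB j * EE σ m y 0 + ∑ i ∈ Finset.Icc 1 (j-1), aB (j-i) * EE σ m y i)
          ≤ σ * (((Real.sqrt 2 / Real.sqrt j) + (33*Real.sqrt 2/30) * (Real.exp ((900*σ^2)*j) / Real.sqrt j)) * EE σ m y 0) := by
            apply mul_le_mul_of_nonneg_left _ (le_of_lt hσ)
            calc aB j * EE σ m y 0 + ∑ i ∈ Finset.Icc 1 (j-1), aB (j-i) * EE σ m y i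
                ≤ (Real.sqrt 2 / Real.sqrt j) * EE σ m y 0
                  + (33*Real.sqrt 2/30) * (Real.exp ((900*σ^2)*j) / Real.sqrt j) * EE σ m y 0 := by
                  rw [← hco]
                  exact hstep
              _ = ((Real.sqrt 2 / Real.sqrt j) + (33*Real.sqrt 2/30) * (Real.exp ((900*σ^2)*j) / Real.sqrt j)) * EE σ m y 0 := by
                  ring
        _ ≤ σ * (3 * (Real.exp ((900*σ^2)*j) / Real.sqrt j) * EE σ m y 0) := by
            apply mul_le_mul_of_nonneg_left _ (le_of_lt hσ)
            exact mul_le_mul_of_nonneg_right hkey hE0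
        _ = 3*σ*Real.exp ((900*σ^2)*j)/Real.sqrt j * EE σ m y 0 := by
            field_simp
    exact le_trans hrec hfinal

lemma srwProb_nonneg (m : ℕ) (x : ℤ) : 0 ≤ srwProb m x := by
  unfold srwProb; positivity

lemma EE_zero_eq (σ : ℝ) (m : ℕ) (y : ℤ) : EE σ m y 0 = srwProb m y := by
  rw [EE_zero]
  unfold VV srwProb
  simp only [pow_zero, Nat.sub_zero, Finset.notMem_empty, false_implies, implies_true, true_and]
  rw [Finset.sum_const]
  have hcard : (Finset.univ : Finset (Fin 0 → Bool)).card = 1 := by simp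
  rw [hcard, one_smul, Finset.sum_boole]
  ring

/-- Core estimate. -/
lemma core (σ : ℝ) (hσ : 0 < σ) (m : ℕ) (x y : ℤ) :
    (1/4^m) * ∑ ε : Fin m → Bool, ∑ η : Fin m → Bool,
      (if walkOf ε m = x ∧ walkOf η m = y then (1+σ)^(collisions m ε η) else (0:ℝ))
    ≤ (Real.sqrt 2 / Real.sqrt ((m:ℝ)+1) + 26*σ*Real.exp ((900*σ^2)*m)) * srwProb m y := by
  have hP : 0 ≤ srwProb m y := srwProb_nonneg m y
  have hZ := Z_le σ hσ m x y
  rw [EE_zero_eq] at hZ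
  have hterm : ∀ j ∈ Finset.Icc 1 m,
      aB (m-j) * EE σ m y j
        ≤ (3*Real.sqrt 2*σ*Real.exp ((900*σ^2)*m)) * (1/(Real.sqrt j * Real.sqrt ((m:ℝ)+1-j))) * srwProb m y := by
    intro j hj
    simp only [Finset.mem_Icc] at hj
    have hjR : (1:ℝ) ≤ (j:ℝ) := by exact_mod_cast hj.1
    have hjmR : (j:ℝ) ≤ (m:ℝ) := by exact_mod_cast hj.2
    have hsj : 0 < Real.sqrt j := Real.sqrt_pos.mpr (by linarith)
    have hsmj : 0 < Real.sqrt ((m:ℝ)+1-j) := Real.sqrt_pos.mpr (by linarith)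
    have hcast : ((m-j : ℕ):ℝ) + 1 = (m:ℝ)+1-j := by
      rw [Nat.cast_sub hj.2]; ring
    have h1 : aB (m-j) = Real.sqrt 2 / Real.sqrt ((m:ℝ)+1-j) := by
      unfold aB; rw [hcast]
    have hEEj : EE σ m y j ≤ 3*σ*Real.exp ((900*σ^2)*j)/Real.sqrt j * srwProb m y := by
      have := EE_le σ hσ m y j hj.1 hj.2
      rwa [EE_zero_eq] at this
    have hexp : Real.exp ((900*σ^2)*j) ≤ Real.exp ((900*σ^2)*m) := by
      apply Real.exp_le_exp.mpr
      apply mul_le_mul_of_nonneg_left hjmR (by positivity)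
    have hEEj' : EE σ m y j ≤ 3*σ*Real.exp ((900*σ^2)*m)/Real.sqrt j * srwProb m y := by
      apply le_trans hEEj
      apply mul_le_mul_of_nonneg_right _ hP
      apply div_le_div_of_nonneg_right _ (le_of_lt hsj)
      nlinarith [hexp, hσ]
    calc aB (m-j) * EE σ m y j
        ≤ (Real.sqrt 2 / Real.sqrt ((m:ℝ)+1-j)) * (3*σ*Real.exp ((900*σ^2)*m)/Real.sqrt j * srwProb m y) := by
          rw [← h1]
          exact mul_le_mul_of_nonneg_left hEEj' (aB_nonneg _)
      _ = (3*Real.sqrt 2*σ*Real.exp ((900*σ^2)*m)) * (1/(Real.sqrt j * Real.sqrt ((m:ℝ)+1-j))) * srwProb m y := by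
          field_simp
  have hs2 : Real.sqrt 2 ≤ 1.415 := by
    rw [show (1.415:ℝ) = Real.sqrt (1.415^2) from (Real.sqrt_sq (by norm_num)).symm]
    apply Real.sqrt_le_sqrt; norm_num
  calc (1/4^m) * ∑ ε : Fin m → Bool, ∑ η : Fin m → Bool,
        (if walkOf ε m = x ∧ walkOf η m = y then (1+σ)^(collisions m ε η) else (0:ℝ))
      ≤ aB m * srwProb m y + ∑ j ∈ Finset.Icc 1 m, aB (m-j) * EE σ m y j := hZ
    _ ≤ aB m * srwProb m y + ∑ j ∈ Finset.Icc 1 m,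
          (3*Real.sqrt 2*σ*Real.exp ((900*σ^2)*m)) * (1/(Real.sqrt j * Real.sqrt ((m:ℝ)+1-j))) * srwProb m y := by
        exact add_le_add (le_refl _) (Finset.sum_le_sum hterm)
    _ = aB m * srwProb m y + (3*Real.sqrt 2*σ*Real.exp ((900*σ^2)*m))
          * (∑ j ∈ Finset.Icc 1 m, 1/(Real.sqrt j * Real.sqrt ((m:ℝ)+1-j))) * srwProb m y := by
        rw [← Finset.sum_mul, ← Finset.mul_sum]
    _ ≤ aB m * srwProb m y + (3*Real.sqrt 2*σ*Real.exp ((900*σ^2)*m)) * 6 * srwProb m y := by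
        apply add_le_add (le_refl _)
        apply mul_le_mul_of_nonneg_right _ hP
        exact mul_le_mul_of_nonneg_left (final_conv m) (by positivity)
    _ ≤ (Real.sqrt 2 / Real.sqrt ((m:ℝ)+1) + 26*σ*Real.exp ((900*σ^2)*m)) * srwProb m y := by
        have haBm : aB m = Real.sqrt 2 / Real.sqrt ((m:ℝ)+1) := rfl
        rw [haBm]
        have hq : (3*Real.sqrt 2*σ*Real.exp ((900*σ^2)*m)) * 6 ≤ 26*σ*Real.exp ((900*σ^2)*m) := by
          have he : 0 < Real.exp ((900*σ^2)*m) := Real.exp_pos _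
          nlinarith [hs2, mul_pos hσ he]
        nlinarith [hP, hq]

/-- Symmetry in `(x, y)`. -/
lemma Z_symm (σ : ℝ) (m : ℕ) (x y : ℤ) :
    ∑ ε : Fin m → Bool, ∑ η : Fin m → Bool,
      (if walkOf ε m = x ∧ walkOf η m = y then (1+σ)^(collisions m ε η) else (0:ℝ))
    = ∑ ε : Fin m → Bool, ∑ η : Fin m → Bool,
      (if walkOf ε m = y ∧ walkOf η m = x then (1+σ)^(collisions m ε η) else (0:ℝ)) := by
  rw [Finset.sum_comm]
  apply Finset.sum_congr rfl
  intro η _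
  apply Finset.sum_congr rfl
  intro ε _
  have hcoll : collisions m ε η = collisions m η ε := by
    unfold collisions
    congr 1
    apply Finset.filter_congr
    intro i _
    exact eq_comm
  rw [hcoll]
  exact if_congr and_comm rfl rfl

/-- Endpoint-restricted exponential collision moment bound for two independent simple
random walks on ℤ started at 0:
E[(1+β²N^{-1/2})^{#collisions ≤ ⌊KN⌋}; Y¹_{⌊KN⌋}=x, Y²_{⌊KN⌋}=y]
  ≤ C (KN)^{-1/2} min(P(Y_{⌊KN⌋}=x), P(Y_{⌊KN⌋}=y)). -/
theorem collision_exponential_moment_endpoint (β K : ℝ) (hβ : 0 < β) (hK : 0 < K) :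
    ∃ C : ℝ, ∀ N : ℕ, 1 ≤ N → ∀ x y : ℤ,
      (1 / (4 : ℝ) ^ (⌊K * (N : ℝ)⌋₊)) *
        ∑ ε : Fin ⌊K * (N : ℝ)⌋₊ → Bool, ∑ η : Fin ⌊K * (N : ℝ)⌋₊ → Bool,
          (if walkOf ε (⌊K * (N : ℝ)⌋₊) = x ∧ walkOf η (⌊K * (N : ℝ)⌋₊) = y then
            (1 + β ^ 2 * (N : ℝ) ^ (-(1/2) : ℝ)) ^ collisions (⌊K * (N : ℝ)⌋₊) ε η
          else 0)
      ≤ C * (K * (N : ℝ)) ^ (-(1/2) : ℝ) *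
          min (srwProb (⌊K * (N : ℝ)⌋₊) x) (srwProb (⌊K * (N : ℝ)⌋₊) y) := by
  refine ⟨Real.sqrt 2 + 26*β^2*Real.sqrt K*Real.exp (900*β^4*K), ?_⟩
  intro N hN x y
  set M : ℕ := ⌊K * (N : ℝ)⌋₊ with hM
  set σ : ℝ := β ^ 2 * (N : ℝ) ^ (-(1/2) : ℝ) with hσdef
  have hNR : (1:ℝ) ≤ (N:ℝ) := by exact_mod_cast hN
  have hNpos : (0:ℝ) < (N:ℝ) := by linarith
  have hσpos : 0 < σ := by
    apply mul_pos (by positivity)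
    exact Real.rpow_pos_of_pos hNpos _
  have hsN : 0 < Real.sqrt N := Real.sqrt_pos.mpr hNpos
  have hKN : (0:ℝ) < K * N := by positivity
  have hsKN : 0 < Real.sqrt (K*N) := Real.sqrt_pos.mpr hKN
  have hσ_eq : σ = β^2 / Real.sqrt N := by
    rw [hσdef, Real.rpow_neg (le_of_lt hNpos), ← Real.sqrt_eq_rpow]
    ring
  have hσ_eq2 : σ = β^2 * Real.sqrt K / Real.sqrt (K*N) := by
    rw [hσ_eq, Real.sqrt_mul (le_of_lt hK)]
    have hsK : 0 < Real.sqrt K := Real.sqrt_pos.mpr hK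
    field_simp
  have hσ2 : σ^2 = β^4 / N := by
    rw [hσ_eq]
    rw [div_pow, Real.sq_sqrt (le_of_lt hNpos)]
    ring_nf
  have hMle : (M:ℝ) ≤ K * N := Nat.floor_le (le_of_lt hKN)
  have hM1 : K * N < (M:ℝ) + 1 := Nat.lt_floor_add_one _
  have hrp : (K * (N:ℝ)) ^ (-(1/2) : ℝ) = 1 / Real.sqrt (K*N) := by
    rw [Real.rpow_neg (le_of_lt hKN), ← Real.sqrt_eq_rpow, one_div]
  -- the core bound, in both orders
  have hcore1 := core σ hσpos M x y
  have hcore2 := core σ hσpos M y x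
  rw [show (1/4^M) * ∑ ε : Fin M → Bool, ∑ η : Fin M → Bool,
      (if walkOf ε M = y ∧ walkOf η M = x then (1+σ)^(collisions M ε η) else (0:ℝ))
      = (1/4^M) * ∑ ε : Fin M → Bool, ∑ η : Fin M → Bool,
      (if walkOf ε M = x ∧ walkOf η M = y then (1+σ)^(collisions M ε η) else (0:ℝ)) from by
    rw [Z_symm σ M x y]] at hcore2
  set Φ : ℝ := Real.sqrt 2 / Real.sqrt ((M:ℝ)+1) + 26*σ*Real.exp ((900*σ^2)*M) with hΦ
  have hΦpos : 0 ≤ Φ := by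
    rw [hΦ]
    positivity
  have hmin : (1/4^M) * ∑ ε : Fin M → Bool, ∑ η : Fin M → Bool,
      (if walkOf ε M = x ∧ walkOf η M = y then (1+σ)^(collisions M ε η) else (0:ℝ))
      ≤ Φ * min (srwProb M x) (srwProb M y) := by
    rcases le_total (srwProb M x) (srwProb M y) with h | h
    · rw [min_eq_left h]
      exact hcore2
    · rw [min_eq_right h]
      exact hcore1
  have hΦle : Φ ≤ (Real.sqrt 2 + 26*β^2*Real.sqrt K*Real.exp (900*β^4*K)) * (K * (N:ℝ)) ^ (-(1/2) : ℝ) := by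
    rw [hrp, hΦ]
    have hpart1 : Real.sqrt 2 / Real.sqrt ((M:ℝ)+1) ≤ Real.sqrt 2 * (1/Real.sqrt (K*N)) := by
      rw [mul_one_div]
      apply div_le_div_of_nonneg_left (Real.sqrt_nonneg 2) hsKN
      apply Real.sqrt_le_sqrt
      linarith
    have hexple : Real.exp ((900*σ^2)*M) ≤ Real.exp (900*β^4*K) := by
      apply Real.exp_le_exp.mpr
      rw [hσ2]
      calc 900*(β^4/N)*(M:ℝ) ≤ 900*(β^4/N)*(K*N) := by
            apply mul_le_mul_of_nonneg_left hMle (by positivity)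
        _ = 900*β^4*K := by field_simp
    have hpart2 : 26*σ*Real.exp ((900*σ^2)*M)
        ≤ 26*β^2*Real.sqrt K*Real.exp (900*β^4*K) * (1/Real.sqrt (K*N)) := by
      nth_rewrite 1 [hσ_eq2]
      have hsK : 0 ≤ Real.sqrt K := Real.sqrt_nonneg K
      calc 26*(β^2*Real.sqrt K/Real.sqrt (K*N))*Real.exp ((900*σ^2)*M)
          ≤ 26*(β^2*Real.sqrt K/Real.sqrt (K*N))*Real.exp (900*β^4*K) := by
            apply mul_le_mul_of_nonneg_left hexple (by positivity)
        _ = 26*β^2*Real.sqrt K*Real.exp (900*β^4*K) * (1/Real.sqrt (K*N)) := by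
            field_simp
            try ring
    calc Real.sqrt 2 / Real.sqrt ((M:ℝ)+1) + 26*σ*Real.exp ((900*σ^2)*M)
        ≤ Real.sqrt 2 * (1/Real.sqrt (K*N)) + 26*β^2*Real.sqrt K*Real.exp (900*β^4*K) * (1/Real.sqrt (K*N)) :=
          add_le_add hpart1 hpart2
      _ = (Real.sqrt 2 + 26*β^2*Real.sqrt K*Real.exp (900*β^4*K)) * (1/Real.sqrt (K*N)) := by ring
  have hminnn : 0 ≤ min (srwProb M x) (srwProb M y) :=
    le_min (srwProb_nonneg M x) (srwProb_nonneg M y)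
  calc (1/4^M) * ∑ ε : Fin M → Bool, ∑ η : Fin M → Bool,
        (if walkOf ε M = x ∧ walkOf η M = y then (1+σ)^(collisions M ε η) else (0:ℝ))
      ≤ Φ * min (srwProb M x) (srwProb M y) := hmin
    _ ≤ (Real.sqrt 2 + 26*β^2*Real.sqrt K*Real.exp (900*β^4*K)) * (K * (N:ℝ)) ^ (-(1/2) : ℝ)
          * min (srwProb M x) (srwProb M y) := by
        exact mul_le_mul_of_nonneg_right hΦle hminnn
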